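/- arXiv:2211.03446 — 3 statements merged into one kernel-verified Lean document; each statement's English description precedes it below -/
import Mathlib

section
/- For every γ ∈ (0,1) and every self-similar profile G ∈ 𝓔_γ one has ∫_ℝ x² G(x) dx ≤ 1/2. As a consequence, there exists a universal constant C̃ > 0 (independent of γ and G) such that ∫_ℝ (1+|x|)^s G(x) dx ≤ C̃ for every s ∈ [0,2], every γ ∈ (0,1), and every G ∈ 𝓔_γ. -/
open MeasureTheory Real Set Filter

noncomputable section

open scoped Topology ENNReal NNReal

/-- `G ∈ 𝓔_γ`: nonnegative, unit mass, zero momentum, third moment finite,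
satisfying the weak steady self-similar equation against bounded `C¹` test functions. -/
def IsProfile (γ : ℝ) (G : ℝ → ℝ) : Prop :=
  (∀ x, 0 ≤ G x) ∧
  Integrable G ∧
  Integrable (fun x => (1 + |x|) ^ (3 : ℝ) * G x) ∧
  (∫ x, G x) = 1 ∧
  (∫ x, x * G x) = 0 ∧
  ∀ φ : ℝ → ℝ, ContDiff ℝ 1 φ →
    (∃ M, ∀ x, |φ x| ≤ M ∧ |deriv φ x| ≤ M) →
    -(1/4) * (∫ x, x * deriv φ x * G x) =
      (1/2) * ∫ x, ∫ y, |x - y| ^ γ * (2 * φ ((x + y) / 2) - φ x - φ y) * G x * G y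

private def tf (c x : ℝ) : ℝ := c * x ^ 2 / (c + x ^ 2)
private def tf' (c x : ℝ) : ℝ := 2 * c ^ 2 * x / (c + x ^ 2) ^ 2
private def tf'' (c x : ℝ) : ℝ := 2 * c ^ 2 * (c - 3 * x ^ 2) / (c + x ^ 2) ^ 3

private lemma den_pos {c : ℝ} (hc : 0 < c) (x : ℝ) : 0 < c + x ^ 2 := by positivity

private lemma hasDerivAt_tf {c : ℝ} (hc : 0 < c) (x : ℝ) :
    HasDerivAt (tf c) (tf' c x) x := by
  have h1 : HasDerivAt (fun x : ℝ => c * x ^ 2) (c * (2 * x)) x := by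
    simpa using ((hasDerivAt_pow 2 x).const_mul c)
  have h2 : HasDerivAt (fun x : ℝ => c + x ^ 2) (2 * x) x := by
    simpa using ((hasDerivAt_pow 2 x).const_add c)
  have := h1.div h2 (den_pos hc x).ne'
  refine this.congr_deriv ?_
  unfold tf'
  rw [div_eq_div_iff (by positivity) (by positivity)]
  ring

private lemma hasDerivAt_tf' {c : ℝ} (hc : 0 < c) (x : ℝ) :
    HasDerivAt (tf' c) (tf'' c x) x := by
  have h1 : HasDerivAt (fun x : ℝ => 2 * c ^ 2 * x) (2 * c ^ 2) x := by
    simpa using (hasDerivAt_id x).const_mul (2 * c ^ 2)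
  have h2 : HasDerivAt (fun x : ℝ => (c + x ^ 2) ^ 2) (2 * (c + x ^ 2) * (2 * x)) x := by
    have hb : HasDerivAt (fun x : ℝ => c + x ^ 2) (2 * x) x := by
      simpa using ((hasDerivAt_pow 2 x).const_add c)
    simpa using (hb.fun_pow 2)
  have hden : ((c + x ^ 2) ^ 2) ≠ 0 := by positivity
  have := h1.div h2 hden
  refine this.congr_deriv ?_
  unfold tf''
  rw [div_eq_div_iff (by positivity) (by positivity)]
  ring

private lemma deriv_tf {c : ℝ} (hc : 0 < c) : deriv (tf c) = tf' c :=
  funext fun x => (hasDerivAt_tf hc x).deriv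

private lemma tf_nonneg {c : ℝ} (hc : 0 < c) (x : ℝ) : 0 ≤ tf c x := by
  unfold tf; positivity

private lemma tf_le {c : ℝ} (hc : 0 < c) (x : ℝ) : tf c x ≤ c := by
  unfold tf
  rw [div_le_iff₀ (den_pos hc x)]
  nlinarith [sq_nonneg x, sq_nonneg c]

private lemma abs_tf'_le {c : ℝ} (hc : 1 ≤ c) (x : ℝ) : |tf' c x| ≤ c := by
  have hc0 : (0:ℝ) < c := lt_of_lt_of_le one_pos hc
  unfold tf'
  rw [abs_div, abs_of_pos (by positivity : (0:ℝ) < (c + x ^ 2) ^ 2),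
    div_le_iff₀ (by positivity : (0:ℝ) < (c + x ^ 2) ^ 2)]
  have h1 : |2 * c ^ 2 * x| = 2 * c ^ 2 * |x| := by
    rw [abs_mul, abs_of_pos (by positivity : (0:ℝ) < 2 * c ^ 2)]
  rw [h1]
  have hx : x ^ 2 = |x| ^ 2 := (sq_abs x).symm
  rw [hx]
  nlinarith [abs_nonneg x, mul_nonneg (mul_nonneg hc0.le hc0.le) (sq_nonneg (2 * |x| - 1)),
    mul_nonneg (mul_nonneg hc0.le hc0.le) (sub_nonneg.2 hc),
    mul_nonneg hc0.le (sq_nonneg (|x| ^ 2))]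

private lemma abs_tf''_le {c : ℝ} (hc : 0 < c) (x : ℝ) : |tf'' c x| ≤ 6 := by
  unfold tf''
  rw [abs_div, abs_of_pos (by positivity : (0:ℝ) < (c + x ^ 2) ^ 3),
    div_le_iff₀ (by positivity : (0:ℝ) < (c + x ^ 2) ^ 3)]
  have h1 : |2 * c ^ 2 * (c - 3 * x ^ 2)| ≤ 2 * c ^ 2 * (3 * (c + x ^ 2)) := by
    rw [abs_mul, abs_of_pos (by positivity : (0:ℝ) < 2 * c ^ 2)]
    have : |c - 3 * x ^ 2| ≤ 3 * (c + x ^ 2) := by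
      rw [abs_le]; constructor <;> nlinarith [sq_nonneg x]
    nlinarith [sq_nonneg c]
  calc |2 * c ^ 2 * (c - 3 * x ^ 2)| ≤ 2 * c ^ 2 * (3 * (c + x ^ 2)) := h1
    _ ≤ 6 * (c + x ^ 2) ^ 3 := by
        nlinarith [mul_nonneg (mul_nonneg (den_pos hc x).le (sq_nonneg x))
          (by positivity : (0:ℝ) ≤ 2 * c + x ^ 2)]

private lemma lip_tf' {c : ℝ} (hc : 0 < c) (a b : ℝ) :
    |tf' c a - tf' c b| ≤ 6 * |a - b| := by
  have h := Convex.norm_image_sub_le_of_norm_deriv_le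
    (f := tf' c) (C := 6) (s := Set.univ)
    (fun x _ => (hasDerivAt_tf' hc x).differentiableAt)
    (fun x _ => by
      rw [(hasDerivAt_tf' hc x).deriv, Real.norm_eq_abs]
      exact abs_tf''_le hc x)
    convex_univ (mem_univ b) (mem_univ a)
  simpa [Real.norm_eq_abs, abs_sub_comm] using h

/-- second difference bound from Lipschitz derivative, ordered case -/
private lemma sec_diff_of_lip_aux {φ φ' : ℝ → ℝ} {L : ℝ}
    (hd : ∀ x, HasDerivAt φ (φ' x) x)
    (hlip : ∀ a b, |φ' a - φ' b| ≤ L * |a - b|) {x y : ℝ} (hxy : x < y) :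
    |2 * φ ((x + y) / 2) - φ x - φ y| ≤ L / 2 * (x - y) ^ 2 := by
  set m := (x + y) / 2 with hm
  have hxm : x < m := by rw [hm]; linarith
  have hmy : m < y := by rw [hm]; linarith
  have hcont : ∀ a b : ℝ, ContinuousOn φ (Icc a b) :=
    fun a b => (Continuous.continuousOn (by
      exact continuous_iff_continuousAt.2 fun z => (hd z).continuousAt))
  obtain ⟨ξ, hξ, hξe⟩ := exists_hasDerivAt_eq_slope φ φ' hxm (hcont x m)
    (fun z _ => hd z)
  obtain ⟨η, hη, hηe⟩ := exists_hasDerivAt_eq_slope φ φ' hmy (hcont m y)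
    (fun z _ => hd z)
  have hmx : m - x = (y - x) / 2 := by rw [hm]; ring
  have hym : y - m = (y - x) / 2 := by rw [hm]; ring
  have e1 : φ m - φ x = φ' ξ * (m - x) := by
    rw [hξe, div_mul_cancel₀ _ (by linarith : m - x ≠ 0)]
  have e2 : φ y - φ m = φ' η * (y - m) := by
    rw [hηe, div_mul_cancel₀ _ (by linarith : y - m ≠ 0)]
  have key : 2 * φ m - φ x - φ y = (φ' ξ - φ' η) * ((y - x) / 2) := by
    have : 2 * φ m - φ x - φ y = (φ m - φ x) - (φ y - φ m) := by ring
    rw [this, e1, e2, hmx, hym]; ring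
  rw [key, abs_mul]
  have hξη : |φ' ξ - φ' η| ≤ L * (y - x) := by
    have := hlip ξ η
    have h1 : |ξ - η| ≤ y - x := by
      rw [abs_le]; constructor
      · nlinarith [hξ.1, hξ.2, hη.1, hη.2]
      · nlinarith [hξ.1, hξ.2, hη.1, hη.2]
    have hL : 0 ≤ L := by
      by_contra h
      push_neg at h
      have h2 := hlip x y
      nlinarith [abs_nonneg (φ' x - φ' y), abs_pos.2 (sub_ne_zero.2 hxy.ne)]
    nlinarith [this]
  have h2 : |((y : ℝ) - x) / 2| = (y - x) / 2 := by
    rw [abs_of_pos]; linarith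
  rw [h2]
  have hL : 0 ≤ L := by
    by_contra h
    push_neg at h
    have h2 := hlip x y
    nlinarith [abs_nonneg (φ' x - φ' y), abs_pos.2 (sub_ne_zero.2 hxy.ne)]
  nlinarith [hξη, sub_pos.2 hxy, abs_nonneg (φ' ξ - φ' η)]

private lemma sec_diff_of_lip {φ φ' : ℝ → ℝ} {L : ℝ} (hL : 0 ≤ L)
    (hd : ∀ x, HasDerivAt φ (φ' x) x)
    (hlip : ∀ a b, |φ' a - φ' b| ≤ L * |a - b|) (x y : ℝ) :
    |2 * φ ((x + y) / 2) - φ x - φ y| ≤ L / 2 * (x - y) ^ 2 := by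
  rcases lt_trichotomy x y with h | h | h
  · exact sec_diff_of_lip_aux hd hlip h
  · subst h
    have e : (x + x) / 2 = x := by ring
    rw [e, show 2 * φ x - φ x - φ x = 0 by ring, abs_zero]
    positivity
  · have := sec_diff_of_lip_aux hd hlip h
    have e : (y + x) / 2 = (x + y) / 2 := by ring
    rw [e] at this
    calc |2 * φ ((x + y) / 2) - φ x - φ y| = |2 * φ ((x + y) / 2) - φ y - φ x| := by
          rw [show 2 * φ ((x + y) / 2) - φ x - φ y = 2 * φ ((x + y) / 2) - φ y - φ x by ring]
      _ ≤ L / 2 * (y - x) ^ 2 := this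
      _ = L / 2 * (x - y) ^ 2 := by ring

/-- second-difference bound for tf -/
private lemma sec_diff_tf {c : ℝ} (hc : 0 < c) (x y : ℝ) :
    |2 * tf c ((x + y) / 2) - tf c x - tf c y| ≤ 3 * (x - y) ^ 2 := by
  have := sec_diff_of_lip (L := 6) (by norm_num) (hasDerivAt_tf hc) (lip_tf' hc) x y
  calc |2 * tf c ((x + y) / 2) - tf c x - tf c y| ≤ 6 / 2 * (x - y) ^ 2 := this
    _ = 3 * (x - y) ^ 2 := by ring

private lemma continuous_tf' {c : ℝ} (hc : 0 < c) : Continuous (tf' c) := by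
  unfold tf'
  exact (continuous_const.mul continuous_id).div
    (((continuous_const.add (continuous_pow 2)).pow 2))
    (fun x => by positivity)

private lemma continuous_tf {c : ℝ} (hc : 0 < c) : Continuous (tf c) := by
  unfold tf
  exact (continuous_const.mul (continuous_pow 2)).div
    (continuous_const.add (continuous_pow 2)) (fun x => (den_pos hc x).ne')

private lemma contDiff_tf {c : ℝ} (hc : 0 < c) : ContDiff ℝ 1 (tf c) := by
  rw [contDiff_one_iff_deriv]
  exact ⟨fun x => (hasDerivAt_tf hc x).differentiableAt,
    by rw [deriv_tf hc]; exact continuous_tf' hc⟩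

private lemma tendsto_ratio (x : ℝ) :
    Tendsto (fun c : ℝ => c / (c + x ^ 2)) atTop (𝓝 1) := by
  have h0 : Tendsto (fun c : ℝ => x ^ 2 / (c + x ^ 2)) atTop (𝓝 0) :=
    Tendsto.div_atTop tendsto_const_nhds
      (tendsto_atTop_add_const_right atTop (x ^ 2) tendsto_id)
  have h1 : Tendsto (fun c : ℝ => 1 - x ^ 2 / (c + x ^ 2)) atTop (𝓝 1) := by
    simpa using (tendsto_const_nhds (x := (1:ℝ)) (f := atTop)).sub h0
  refine h1.congr' ?_
  filter_upwards [eventually_ge_atTop (1:ℝ)] with c hc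
  have : c + x ^ 2 ≠ 0 := (den_pos (by linarith) x).ne'
  field_simp
  ring

private lemma tendsto_tf (x : ℝ) :
    Tendsto (fun c : ℝ => tf c x) atTop (𝓝 (x ^ 2)) := by
  have h := (tendsto_ratio x).const_mul (x ^ 2)
  rw [mul_one] at h
  refine h.congr' ?_
  filter_upwards [eventually_ge_atTop (1:ℝ)] with c hc
  have : c + x ^ 2 ≠ 0 := (den_pos (by linarith) x).ne'
  unfold tf; field_simp

private lemma tendsto_x_tf' (x : ℝ) :
    Tendsto (fun c : ℝ => x * tf' c x) atTop (𝓝 (2 * x ^ 2)) := by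
  have h := ((tendsto_ratio x).mul (tendsto_ratio x)).const_mul (2 * x ^ 2)
  rw [mul_one, mul_one] at h
  refine h.congr' ?_
  filter_upwards [eventually_ge_atTop (1:ℝ)] with c hc
  have : c + x ^ 2 ≠ 0 := (den_pos (by linarith) x).ne'
  unfold tf'; field_simp

private lemma x_tf'_bound {c : ℝ} (hc : 0 < c) (x : ℝ) :
    |x * tf' c x| ≤ 2 * x ^ 2 := by
  unfold tf'
  have he : x * (2 * c ^ 2 * x / (c + x ^ 2) ^ 2) = 2 * c ^ 2 * x ^ 2 / (c + x ^ 2) ^ 2 := by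
    ring
  rw [he, abs_div, abs_of_pos (by positivity : (0:ℝ) < (c + x ^ 2) ^ 2),
    abs_of_nonneg (by positivity : (0:ℝ) ≤ 2 * c ^ 2 * x ^ 2),
    div_le_iff₀ (by positivity : (0:ℝ) < (c + x ^ 2) ^ 2)]
  nlinarith [sq_nonneg x, sq_nonneg (x ^ 2), mul_nonneg hc.le (sq_nonneg x), sq_nonneg c]

/-- key pointwise bound: `|x-y|^γ (x-y)^2 ≤ (1+|x|)^3 (1+|y|)^3` (rpow weights). -/
private lemma key_bound {γ : ℝ} (hγ0 : 0 ≤ γ) (hγ1 : γ ≤ 1) (x y : ℝ) :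
    |x - y| ^ γ * (x - y) ^ 2 ≤ (1 + |x|) ^ (3:ℝ) * (1 + |y|) ^ (3:ℝ) := by
  set t := |x - y| with ht
  have ht0 : 0 ≤ t := abs_nonneg _
  have hsq : (x - y) ^ 2 = t ^ 2 := (sq_abs _).symm
  have hbx : (1:ℝ) ≤ 1 + |x| := by simp [abs_nonneg]
  have hby : (1:ℝ) ≤ 1 + |y| := by simp [abs_nonneg]
  have hB1 : (1:ℝ) ≤ (1 + |x|) ^ (3:ℝ) * (1 + |y|) ^ (3:ℝ) := by
    have h1 := Real.one_le_rpow hbx (by norm_num : (0:ℝ) ≤ 3)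
    have h2 := Real.one_le_rpow hby (by norm_num : (0:ℝ) ≤ 3)
    nlinarith
  have hrw : (1 + |x|) ^ (3:ℝ) * (1 + |y|) ^ (3:ℝ) = ((1 + |x|) * (1 + |y|)) ^ 3 := by
    rw [show (3:ℝ) = ((3:ℕ):ℝ) by norm_num, Real.rpow_natCast, Real.rpow_natCast, ← mul_pow]
  rcases le_total t 1 with h | h
  · have h1 : t ^ γ ≤ 1 := Real.rpow_le_one ht0 h hγ0
    have h2 : t ^ 2 ≤ 1 := by nlinarith
    rw [hsq]
    nlinarith [Real.rpow_nonneg ht0 γ, hB1]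
  · have h1 : t ^ γ ≤ t := by
      have := Real.rpow_le_rpow_of_exponent_le h hγ1
      rwa [Real.rpow_one] at this
    have h2 : t ^ γ * t ^ 2 ≤ t ^ 3 := by nlinarith [Real.rpow_nonneg ht0 γ, sq_nonneg t]
    have h3 : t ≤ (1 + |x|) * (1 + |y|) := by
      have habs : t ≤ |x| + |y| := abs_sub _ _
      nlinarith [abs_nonneg x, abs_nonneg y, mul_nonneg (abs_nonneg x) (abs_nonneg y)]
    have h4 : t ^ 3 ≤ ((1 + |x|) * (1 + |y|)) ^ 3 := pow_le_pow_left₀ ht0 h3 3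
    rw [hsq, hrw]
    linarith

private lemma key_bound' (x y : ℝ) :
    (x - y) ^ 2 ≤ (1 + |x|) ^ (3:ℝ) * (1 + |y|) ^ (3:ℝ) := by
  have := key_bound (le_refl 0) (by norm_num) x y
  rwa [Real.rpow_zero, one_mul] at this

private lemma w_pos (x : ℝ) : (0:ℝ) < (1 + |x|) ^ (3:ℝ) :=
  Real.rpow_pos_of_pos (by positivity) _

private lemma abs_le_w (x : ℝ) : |x| ≤ (1 + |x|) ^ (3:ℝ) := by
  have hb : (1:ℝ) ≤ 1 + |x| := by simp [abs_nonneg]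
  have h := Real.rpow_le_rpow_of_exponent_le hb (by norm_num : (1:ℝ) ≤ 3)
  rw [Real.rpow_one] at h
  linarith

private lemma sq_le_w (x : ℝ) : x ^ 2 ≤ (1 + |x|) ^ (3:ℝ) := by
  have hb : (1:ℝ) ≤ 1 + |x| := by simp [abs_nonneg]
  have h := Real.rpow_le_rpow_of_exponent_le hb (by norm_num : (2:ℝ) ≤ 3)
  rw [show ((2:ℝ)) = ((2:ℕ):ℝ) by norm_num, Real.rpow_natCast] at h
  nlinarith [abs_nonneg x, sq_abs x]

private lemma rpow_split {γ : ℝ} (hγ : 0 ≤ γ) (t : ℝ) :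
    (t ^ 2) ^ ((2 + γ)/2) = |t| ^ γ * t ^ 2 := by
  have habs : t ^ 2 = |t| ^ (2:ℝ) := by
    rw [show ((2:ℝ)) = ((2:ℕ):ℝ) by norm_num, Real.rpow_natCast, sq_abs]
  rw [habs, ← Real.rpow_mul (abs_nonneg t), show (2:ℝ) * ((2 + γ)/2) = γ + 2 by ring,
    Real.rpow_add_of_nonneg (abs_nonneg t) hγ (by norm_num)]

private lemma energy_le {γ : ℝ} (hγ0 : 0 < γ) (hγ1 : γ < 1) {G : ℝ → ℝ} (hP : IsProfile γ G) :
    (∫ x, x ^ 2 * G x) ≤ 1/2 := by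
  classical
  obtain ⟨hGnn, hGint, hG3, hmass, hmom, hweak⟩ := hP
  have hGsm := hGint.aestronglyMeasurable
  set E : ℝ := ∫ x, x ^ 2 * G x with hE
  have hmono : ∀ f : ℝ → ℝ, Continuous f → (∀ x, |f x| ≤ (1 + |x|) ^ (3:ℝ)) →
      Integrable (fun x => f x * G x) := by
    intro f hf hb
    refine hG3.mono' (hf.aestronglyMeasurable.mul hGsm) (ae_of_all _ fun x => ?_)
    rw [Real.norm_eq_abs, abs_mul, abs_of_nonneg (hGnn x)]
    exact mul_le_mul_of_nonneg_right (hb x) (hGnn x)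
  have hIxG : Integrable (fun x => x * G x) :=
    hmono _ continuous_id (fun x => abs_le_w x)
  have hIx2G : Integrable (fun x => x ^ 2 * G x) :=
    hmono _ (continuous_pow 2) (fun x => by
      rw [abs_of_nonneg (sq_nonneg x)]; exact sq_le_w x)
  have hI2x2G : Integrable (fun x => 2 * x ^ 2 * G x) := by
    have := hIx2G.const_mul 2
    simpa [mul_assoc] using this
  -- product measure facts
  set ν : Measure (ℝ × ℝ) := (volume : Measure ℝ).prod volume with hν
  have hW : Integrable
      (fun p : ℝ × ℝ => ((1 + |p.1|) ^ (3:ℝ) * G p.1) * ((1 + |p.2|) ^ (3:ℝ) * G p.2)) ν :=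
    hG3.mul_prod hG3
  have hGG : Integrable (fun p : ℝ × ℝ => G p.1 * G p.2) ν := hGint.mul_prod hGint
  have hGGsm := hGG.aestronglyMeasurable
  have hcontT : Continuous (fun p : ℝ × ℝ => |p.1 - p.2| ^ γ) :=
    Continuous.rpow_const ((continuous_fst.sub continuous_snd).abs) (fun p => Or.inr hγ0.le)
  have hGGnn : ∀ p : ℝ × ℝ, 0 ≤ G p.1 * G p.2 := fun p => mul_nonneg (hGnn _) (hGnn _)
  -- Integrability of the two key product integrands
  have hIK : Integrable (fun p : ℝ × ℝ => (p.1 - p.2) ^ 2 * (G p.1 * G p.2)) ν := by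
    refine (hW.const_mul 1).mono'
      ((((continuous_fst.sub continuous_snd).pow 2).aestronglyMeasurable).mul hGGsm)
      (ae_of_all _ fun p => ?_)
    rw [Real.norm_eq_abs, abs_mul, abs_of_nonneg (hGGnn p), abs_of_nonneg (sq_nonneg _), one_mul]
    calc (p.1 - p.2) ^ 2 * (G p.1 * G p.2)
        ≤ ((1 + |p.1|) ^ (3:ℝ) * (1 + |p.2|) ^ (3:ℝ)) * (G p.1 * G p.2) :=
          mul_le_mul_of_nonneg_right (key_bound' p.1 p.2) (hGGnn p)
      _ = ((1 + |p.1|) ^ (3:ℝ) * G p.1) * ((1 + |p.2|) ^ (3:ℝ) * G p.2) := by ring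
  have hIP : Integrable (fun p : ℝ × ℝ => |p.1 - p.2| ^ γ * (p.1 - p.2) ^ 2 * (G p.1 * G p.2)) ν := by
    refine (hW.const_mul 1).mono'
      (((hcontT.mul ((continuous_fst.sub continuous_snd).pow 2)).aestronglyMeasurable).mul hGGsm)
      (ae_of_all _ fun p => ?_)
    rw [Real.norm_eq_abs, abs_mul, abs_of_nonneg (hGGnn p),
      abs_of_nonneg (mul_nonneg (Real.rpow_nonneg (abs_nonneg _) _) (sq_nonneg _)), one_mul]
    calc |p.1 - p.2| ^ γ * (p.1 - p.2) ^ 2 * (G p.1 * G p.2)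
        ≤ ((1 + |p.1|) ^ (3:ℝ) * (1 + |p.2|) ^ (3:ℝ)) * (G p.1 * G p.2) :=
          mul_le_mul_of_nonneg_right (key_bound hγ0.le hγ1.le p.1 p.2) (hGGnn p)
      _ = ((1 + |p.1|) ^ (3:ℝ) * G p.1) * ((1 + |p.2|) ^ (3:ℝ) * G p.2) := by ring
  -- the time-dependent integrand and its uniform bound
  have hFb : ∀ c : ℝ, 0 < c → ∀ p : ℝ × ℝ,
      ‖|p.1 - p.2| ^ γ * (2 * tf c ((p.1 + p.2) / 2) - tf c p.1 - tf c p.2) * G p.1 * G p.2‖ ≤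
        3 * (((1 + |p.1|) ^ (3:ℝ) * G p.1) * ((1 + |p.2|) ^ (3:ℝ) * G p.2)) := by
    intro c hc p
    obtain ⟨x, y⟩ := p
    simp only
    have hA : (0:ℝ) ≤ |x - y| ^ γ := Real.rpow_nonneg (abs_nonneg _) _
    rw [Real.norm_eq_abs, abs_mul, abs_mul, abs_mul, abs_of_nonneg hA,
      abs_of_nonneg (hGnn x), abs_of_nonneg (hGnn y)]
    calc |x - y| ^ γ * |2 * tf c ((x + y) / 2) - tf c x - tf c y| * G x * G y
        ≤ |x - y| ^ γ * (3 * (x - y) ^ 2) * G x * G y := by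
          have h := sec_diff_tf hc x y
          have h1 : |x - y| ^ γ * |2 * tf c ((x + y) / 2) - tf c x - tf c y| ≤
              |x - y| ^ γ * (3 * (x - y) ^ 2) := mul_le_mul_of_nonneg_left h hA
          exact mul_le_mul_of_nonneg_right
            (mul_le_mul_of_nonneg_right h1 (hGnn x)) (hGnn y)
      _ = 3 * ((|x - y| ^ γ * (x - y) ^ 2) * (G x * G y)) := by ring
      _ ≤ 3 * (((1 + |x|) ^ (3:ℝ) * (1 + |y|) ^ (3:ℝ)) * (G x * G y)) := by
          have := mul_le_mul_of_nonneg_right (key_bound hγ0.le hγ1.le x y)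
            (mul_nonneg (hGnn x) (hGnn y))
          linarith
      _ = 3 * (((1 + |x|) ^ (3:ℝ) * G x) * ((1 + |y|) ^ (3:ℝ) * G y)) := by ring
  have hFsm : ∀ c : ℝ, 0 < c → AEStronglyMeasurable
      (fun p : ℝ × ℝ => |p.1 - p.2| ^ γ * (2 * tf c ((p.1 + p.2) / 2) - tf c p.1 - tf c p.2) *
        G p.1 * G p.2) ν := by
    intro c hc
    have hcontD : Continuous (fun p : ℝ × ℝ =>
        2 * tf c ((p.1 + p.2) / 2) - tf c p.1 - tf c p.2) := by
      have hm : Continuous fun p : ℝ × ℝ => (p.1 + p.2) / 2 := by fun_prop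
      have h1 := (continuous_tf hc).comp hm
      have h2 := (continuous_tf hc).comp (continuous_fst : Continuous (Prod.fst : ℝ × ℝ → ℝ))
      have h3 := (continuous_tf hc).comp (continuous_snd : Continuous (Prod.snd : ℝ × ℝ → ℝ))
      exact (((continuous_const.mul h1).sub h2).sub h3 :)
    exact (((hcontT.mul hcontD).aestronglyMeasurable).mul hGGsm).congr
      (ae_of_all _ fun p => by simp only [Pi.mul_apply]; ring)
  have hFint : ∀ c : ℝ, 0 < c → Integrable
      (fun p : ℝ × ℝ => |p.1 - p.2| ^ γ * (2 * tf c ((p.1 + p.2) / 2) - tf c p.1 - tf c p.2) *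
        G p.1 * G p.2) ν := by
    intro c hc
    exact (hW.const_mul 3).mono' (hFsm c hc) (ae_of_all _ (hFb c hc))
  -- limit of the left-hand sides
  have hLHS : Tendsto (fun c : ℝ => ∫ x, x * tf' c x * G x) atTop
      (𝓝 (∫ x, 2 * x ^ 2 * G x)) := by
    refine tendsto_integral_filter_of_dominated_convergence (fun x => 2 * x ^ 2 * G x)
      ?_ ?_ hI2x2G ?_
    · filter_upwards [eventually_gt_atTop (0:ℝ)] with c hc
      exact ((continuous_id.mul (continuous_tf' hc)).aestronglyMeasurable).mul hGsm
    · filter_upwards [eventually_gt_atTop (0:ℝ)] with c hc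
      refine ae_of_all _ fun x => ?_
      rw [Real.norm_eq_abs, abs_mul, abs_of_nonneg (hGnn x)]
      exact mul_le_mul_of_nonneg_right (x_tf'_bound hc x) (hGnn x)
    · exact ae_of_all _ fun x => (tendsto_x_tf' x).mul_const (G x)
  -- limit of the right-hand sides
  have hRHS : Tendsto (fun c : ℝ => ∫ p, (|p.1 - p.2| ^ γ *
        (2 * tf c ((p.1 + p.2) / 2) - tf c p.1 - tf c p.2) * G p.1 * G p.2) ∂ν) atTop
      (𝓝 (∫ p : ℝ × ℝ, (|p.1 - p.2| ^ γ * (-((p.1 - p.2) ^ 2 / 2)) * G p.1 * G p.2) ∂ν)) := by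
    refine tendsto_integral_filter_of_dominated_convergence
      (fun p => 3 * (((1 + |p.1|) ^ (3:ℝ) * G p.1) * ((1 + |p.2|) ^ (3:ℝ) * G p.2)))
      ?_ ?_ (hW.const_mul 3) ?_
    · filter_upwards [eventually_gt_atTop (0:ℝ)] with c hc
      exact hFsm c hc
    · filter_upwards [eventually_gt_atTop (0:ℝ)] with c hc
      exact ae_of_all _ (hFb c hc)
    · refine ae_of_all _ fun p => ?_
      obtain ⟨x, y⟩ := p
      simp only
      have hD : Tendsto (fun c : ℝ => 2 * tf c ((x + y) / 2) - tf c x - tf c y) atTop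
          (𝓝 (-((x - y) ^ 2 / 2))) := by
        rw [show -((x - y) ^ 2 / 2) = 2 * ((x + y) / 2) ^ 2 - x ^ 2 - y ^ 2 by ring]
        exact (((tendsto_tf ((x + y) / 2)).const_mul 2).sub (tendsto_tf x)).sub (tendsto_tf y)
      exact ((hD.const_mul (|x - y| ^ γ)).mul_const (G x)).mul_const (G y)
  -- the weak equation for each test function, in product form
  have heq : ∀ᶠ c : ℝ in atTop,
      -(1/4) * (∫ x, x * tf' c x * G x) =
        (1/2) * ∫ p : ℝ × ℝ, (|p.1 - p.2| ^ γ *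
          (2 * tf c ((p.1 + p.2) / 2) - tf c p.1 - tf c p.2) * G p.1 * G p.2) ∂ν := by
    filter_upwards [eventually_ge_atTop (1:ℝ)] with c hc1
    have hc : 0 < c := lt_of_lt_of_le one_pos hc1
    have hM : ∃ M, ∀ x, |tf c x| ≤ M ∧ |deriv (tf c) x| ≤ M := by
      refine ⟨c, fun x => ⟨?_, ?_⟩⟩
      · rw [abs_of_nonneg (tf_nonneg hc x)]; exact tf_le hc x
      · rw [deriv_tf hc]; exact abs_tf'_le hc1 x
    have h := hweak (tf c) (contDiff_tf hc) hM
    rw [deriv_tf hc] at h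
    have h2 : (∫ x, ∫ y, |x - y| ^ γ * (2 * tf c ((x + y) / 2) - tf c x - tf c y) * G x * G y)
        = ∫ p : ℝ × ℝ, (|p.1 - p.2| ^ γ *
          (2 * tf c ((p.1 + p.2) / 2) - tf c p.1 - tf c p.2) * G p.1 * G p.2) ∂ν :=
      MeasureTheory.integral_integral (hFint c hc)
    rw [h2] at h
    exact h
  have huniq := tendsto_nhds_unique
    (((hLHS.const_mul (-(1/4))).congr' heq)) (hRHS.const_mul (1/2))
  have hL3 : (∫ x, 2 * x ^ 2 * G x) = 2 * E := by
    rw [show (fun x => 2 * x ^ 2 * G x) = fun x => 2 * (x ^ 2 * G x) from funext fun x => by ring,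
      integral_const_mul, hE]
  have hR3 : (∫ p : ℝ × ℝ, (|p.1 - p.2| ^ γ * (-((p.1 - p.2) ^ 2 / 2)) * G p.1 * G p.2) ∂ν)
      = -(1/2) * ∫ p : ℝ × ℝ, (|p.1 - p.2| ^ γ * (p.1 - p.2) ^ 2 * (G p.1 * G p.2)) ∂ν := by
    rw [show (fun p : ℝ × ℝ => |p.1 - p.2| ^ γ * (-((p.1 - p.2) ^ 2 / 2)) * G p.1 * G p.2)
        = fun p : ℝ × ℝ => -(1/2) * (|p.1 - p.2| ^ γ * (p.1 - p.2) ^ 2 * (G p.1 * G p.2))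
        from funext fun p => by ring, integral_const_mul]
  rw [hL3, hR3] at huniq
  have hIP2E : (∫ p : ℝ × ℝ, (|p.1 - p.2| ^ γ * (p.1 - p.2) ^ 2 * (G p.1 * G p.2)) ∂ν)
      = 2 * E := by linarith
  -- second moment expansion
  have hJ : (∫ p : ℝ × ℝ, ((p.1 - p.2) ^ 2 * (G p.1 * G p.2)) ∂ν) = 2 * E := by
    have h2 : (∫ x, ∫ y, (x - y) ^ 2 * (G x * G y))
        = ∫ p : ℝ × ℝ, ((p.1 - p.2) ^ 2 * (G p.1 * G p.2)) ∂ν :=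
      MeasureTheory.integral_integral hIK
    rw [← h2]
    have hIn : ∀ x : ℝ, (∫ y, (x - y) ^ 2 * (G x * G y)) = G x * (x ^ 2 + E) := by
      intro x
      rw [show (fun y => (x - y) ^ 2 * (G x * G y)) = fun y => G x * ((x - y) ^ 2 * G y)
        from funext fun y => by ring, integral_const_mul]
      congr 1
      have hsum : (∫ y, (x ^ 2 * G y + -(2 * x) * (y * G y) + y ^ 2 * G y)) = x ^ 2 + E := by
        have hsum1 : (∫ y, (x ^ 2 * G y + -(2 * x) * (y * G y) + y ^ 2 * G y))
            = (∫ y, (x ^ 2 * G y + -(2 * x) * (y * G y))) + ∫ y, y ^ 2 * G y :=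
          integral_add ((hGint.const_mul (x ^ 2)).add (hIxG.const_mul (-(2 * x)))) hIx2G
        have hsum2 : (∫ y, (x ^ 2 * G y + -(2 * x) * (y * G y)))
            = (∫ y, x ^ 2 * G y) + ∫ y, -(2 * x) * (y * G y) :=
          integral_add (hGint.const_mul (x ^ 2)) (hIxG.const_mul (-(2 * x)))
        rw [hsum1, hsum2, integral_const_mul, integral_const_mul, hmass, hmom, ← hE]
        ring
      rw [show (fun y => (x - y) ^ 2 * G y)
          = fun y => x ^ 2 * G y + -(2 * x) * (y * G y) + y ^ 2 * G y
        from funext fun y => by ring]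
      exact hsum
    rw [show (fun x => ∫ y, (x - y) ^ 2 * (G x * G y)) = fun x => G x * (x ^ 2 + E)
      from funext hIn,
      show (fun x => G x * (x ^ 2 + E)) = fun x => x ^ 2 * G x + E * G x
      from funext fun x => by ring]
    have hout : (∫ x, (x ^ 2 * G x + E * G x)) = (∫ x, x ^ 2 * G x) + ∫ x, E * G x :=
      integral_add hIx2G (hGint.const_mul E)
    rw [hout, integral_const_mul, hmass, ← hE]
    ring
  -- Jensen via Hoelder in `ℝ≥0∞`
  have hγ2 : (0:ℝ) < 2 + γ := by linarith
  have hγne : γ ≠ 0 := hγ0.ne'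
  have hpq : Real.HolderConjugate ((2 + γ)/2) ((2 + γ)/γ) := by
    refine ⟨?_, by positivity, by positivity⟩
    rw [inv_div, inv_div, inv_one]; field_simp
  have hGG1 : (∫ p : ℝ × ℝ, (G p.1 * G p.2) ∂ν) = 1 := by
    rw [MeasureTheory.integral_prod_mul (f := G) (g := G), hmass]; norm_num
  have hwmeas : AEMeasurable (fun p : ℝ × ℝ => ENNReal.ofReal (G p.1 * G p.2)) ν :=
    ENNReal.measurable_ofReal.comp_aemeasurable hGGsm.aemeasurable
  have hAmeas : AEMeasurable (fun p : ℝ × ℝ => ENNReal.ofReal ((p.1 - p.2) ^ 2)) ν :=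
    (ENNReal.measurable_ofReal.comp
      ((continuous_fst.sub continuous_snd).pow 2).measurable).aemeasurable
  have ha : (0:ℝ) ≤ 2 / (2 + γ) := by positivity
  have hb : (0:ℝ) ≤ γ / (2 + γ) := by positivity
  have holder := ENNReal.lintegral_mul_le_Lp_mul_Lq ν hpq
    (hAmeas.mul (hwmeas.pow_const (2 / (2 + γ)))) (hwmeas.pow_const (γ / (2 + γ)))
  have hfg : ∀ p : ℝ × ℝ,
      ((fun p : ℝ × ℝ => ENNReal.ofReal ((p.1 - p.2) ^ 2) *
          ENNReal.ofReal (G p.1 * G p.2) ^ (2 / (2 + γ))) *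
        (fun p : ℝ × ℝ => ENNReal.ofReal (G p.1 * G p.2) ^ (γ / (2 + γ)))) p
      = ENNReal.ofReal ((p.1 - p.2) ^ 2 * (G p.1 * G p.2)) := by
    intro p
    simp only [Pi.mul_apply]
    rw [mul_assoc, ← ENNReal.rpow_add_of_nonneg _ _ ha hb,
      show 2 / (2 + γ) + γ / (2 + γ) = 1 by field_simp,
      ENNReal.rpow_one, ← ENNReal.ofReal_mul (sq_nonneg _)]
  have hfp : ∀ p : ℝ × ℝ,
      (ENNReal.ofReal ((p.1 - p.2) ^ 2) *
          ENNReal.ofReal (G p.1 * G p.2) ^ (2 / (2 + γ))) ^ ((2 + γ)/2)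
      = ENNReal.ofReal (|p.1 - p.2| ^ γ * (p.1 - p.2) ^ 2 * (G p.1 * G p.2)) := by
    intro p
    rw [ENNReal.mul_rpow_of_nonneg _ _ (Real.HolderTriple.left_pos hpq).le, ← ENNReal.rpow_mul,
      show 2 / (2 + γ) * ((2 + γ)/2) = 1 by field_simp,
      ENNReal.rpow_one,
      ENNReal.ofReal_rpow_of_nonneg (sq_nonneg _) (Real.HolderTriple.left_pos hpq).le,
      rpow_split hγ0.le,
      ← ENNReal.ofReal_mul (mul_nonneg (Real.rpow_nonneg (abs_nonneg _) _) (sq_nonneg _))]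
  have hgq : ∀ p : ℝ × ℝ,
      (ENNReal.ofReal (G p.1 * G p.2) ^ (γ / (2 + γ))) ^ ((2 + γ)/γ)
      = ENNReal.ofReal (G p.1 * G p.2) := by
    intro p
    rw [← ENNReal.rpow_mul, show γ / (2 + γ) * ((2 + γ)/γ) = 1 by field_simp,
      ENNReal.rpow_one]
  have hwint : (∫⁻ p : ℝ × ℝ, ENNReal.ofReal (G p.1 * G p.2) ∂ν) = 1 := by
    rw [← MeasureTheory.ofReal_integral_eq_lintegral_ofReal hGG (ae_of_all _ hGGnn), hGG1,
      ENNReal.ofReal_one]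
  have hfinal : ENNReal.ofReal (2 * E) ≤ ENNReal.ofReal (2 * E) ^ (2 / (2 + γ)) := by
    calc ENNReal.ofReal (2 * E)
        = ∫⁻ p : ℝ × ℝ, ENNReal.ofReal ((p.1 - p.2) ^ 2 * (G p.1 * G p.2)) ∂ν := by
          rw [← hJ]
          exact MeasureTheory.ofReal_integral_eq_lintegral_ofReal hIK
            (ae_of_all _ fun p => mul_nonneg (sq_nonneg _) (hGGnn p))
      _ = ∫⁻ p : ℝ × ℝ,
          ((fun p : ℝ × ℝ => ENNReal.ofReal ((p.1 - p.2) ^ 2) *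
              ENNReal.ofReal (G p.1 * G p.2) ^ (2 / (2 + γ))) *
            (fun p : ℝ × ℝ => ENNReal.ofReal (G p.1 * G p.2) ^ (γ / (2 + γ)))) p ∂ν :=
          (lintegral_congr hfg).symm
      _ ≤ (∫⁻ p : ℝ × ℝ, (ENNReal.ofReal ((p.1 - p.2) ^ 2) *
              ENNReal.ofReal (G p.1 * G p.2) ^ (2 / (2 + γ))) ^ ((2 + γ)/2) ∂ν) ^ (1/((2 + γ)/2)) *
          (∫⁻ p : ℝ × ℝ, (ENNReal.ofReal (G p.1 * G p.2) ^ (γ / (2 + γ))) ^ ((2 + γ)/γ) ∂ν) ^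
            (1/((2 + γ)/γ)) := holder
      _ = ENNReal.ofReal (2 * E) ^ (2 / (2 + γ)) := by
          rw [lintegral_congr hfp, lintegral_congr hgq, hwint,
            ← MeasureTheory.ofReal_integral_eq_lintegral_ofReal hIP
              (ae_of_all _ fun p => mul_nonneg
                (mul_nonneg (Real.rpow_nonneg (abs_nonneg _) _) (sq_nonneg _)) (hGGnn p)),
            hIP2E, ENNReal.one_rpow, mul_one, one_div_div]
  by_contra hcon
  push_neg at hcon
  have h2E : (1:ℝ) < 2 * E := by linarith
  have h1a : (1:ℝ≥0∞) < ENNReal.ofReal (2 * E) := ENNReal.one_lt_ofReal.2 h2E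
  have hexp : 2 / (2 + γ) < 1 := by rw [div_lt_one hγ2]; linarith
  have hlt := ENNReal.rpow_lt_rpow_of_exponent_lt h1a ENNReal.ofReal_ne_top hexp
  rw [ENNReal.rpow_one] at hlt
  exact absurd (lt_of_le_of_lt hfinal hlt) (lt_irrefl _)

/-- **Uniform energy control.** Every self-similar profile has kinetic energy at most `1/2`,
and consequently its weighted `L¹` norms of order `s ∈ [0,2]` are bounded by a
universal constant. -/
theorem uniform_energy_control :
    (∀ γ ∈ Ioo (0:ℝ) 1, ∀ G : ℝ → ℝ, IsProfile γ G →
      (∫ x, x ^ 2 * G x) ≤ 1/2) ∧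
    ∃ C > (0:ℝ), ∀ s ∈ Icc (0:ℝ) 2, ∀ γ ∈ Ioo (0:ℝ) 1, ∀ G : ℝ → ℝ, IsProfile γ G →
      (∫ x, (1 + |x|) ^ s * G x) ≤ C := by
  constructor
  · intro γ hγ G hP
    exact energy_le hγ.1 hγ.2 hP
  · refine ⟨3, by norm_num, ?_⟩
    intro s hs γ hγ G hP
    have hEle : (∫ x, x ^ 2 * G x) ≤ 1/2 := energy_le hγ.1 hγ.2 hP
    obtain ⟨hGnn, hGint, hG3, hmass, hmom, -⟩ := hP
    have hGsm := hGint.aestronglyMeasurable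
    have hmono : ∀ f : ℝ → ℝ, Continuous f → (∀ x, |f x| ≤ (1 + |x|) ^ (3:ℝ)) →
        Integrable (fun x => f x * G x) := by
      intro f hf hb
      refine hG3.mono' (hf.aestronglyMeasurable.mul hGsm) (ae_of_all _ fun x => ?_)
      rw [Real.norm_eq_abs, abs_mul, abs_of_nonneg (hGnn x)]
      exact mul_le_mul_of_nonneg_right (hb x) (hGnn x)
    have hbase : ∀ x : ℝ, (1:ℝ) ≤ 1 + |x| := fun x => by simp [abs_nonneg]
    have hw1 : ∀ x : ℝ, (1:ℝ) ≤ (1 + |x|) ^ (3:ℝ) :=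
      fun x => Real.one_le_rpow (hbase x) (by norm_num)
    have hIx2G : Integrable (fun x => x ^ 2 * G x) :=
      hmono _ (continuous_pow 2) (fun x => by
        rw [abs_of_nonneg (sq_nonneg x)]; exact sq_le_w x)
    have hIabsG : Integrable (fun x => |x| * G x) :=
      hmono _ continuous_abs (fun x => by rw [abs_abs]; exact abs_le_w x)
    have hIsG : Integrable (fun x => (1 + |x|) ^ s * G x) := by
      refine hmono _ ((continuous_const.add continuous_abs).rpow_const
        (fun x => Or.inr hs.1)) (fun x => ?_)
      rw [abs_of_nonneg (Real.rpow_nonneg (by positivity) _)]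
      exact Real.rpow_le_rpow_of_exponent_le (hbase x) (by linarith [hs.2])
    have hI2G : Integrable (fun x => (1 + |x|) ^ (2:ℝ) * G x) := by
      refine hmono _ ((continuous_const.add continuous_abs).rpow_const
        (fun x => Or.inr (by norm_num))) (fun x => ?_)
      rw [abs_of_nonneg (Real.rpow_nonneg (by positivity) _)]
      exact Real.rpow_le_rpow_of_exponent_le (hbase x) (by norm_num)
    have hle1 : (∫ x, (1 + |x|) ^ s * G x) ≤ ∫ x, (1 + |x|) ^ (2:ℝ) * G x :=
      integral_mono hIsG hI2G (fun x => mul_le_mul_of_nonneg_right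
        (Real.rpow_le_rpow_of_exponent_le (hbase x) hs.2) (hGnn x))
    have hval : (∫ x, (1 + |x|) ^ (2:ℝ) * G x)
        = 1 + 2 * (∫ x, |x| * G x) + ∫ x, x ^ 2 * G x := by
      rw [show (fun x => (1 + |x|) ^ (2:ℝ) * G x)
          = fun x => G x + 2 * (|x| * G x) + x ^ 2 * G x from funext fun x => by
        rw [show ((2:ℝ)) = ((2:ℕ):ℝ) by norm_num, Real.rpow_natCast]
        linear_combination G x * sq_abs x]
      have h1 : (∫ x, (G x + 2 * (|x| * G x) + x ^ 2 * G x))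
          = (∫ x, (G x + 2 * (|x| * G x))) + ∫ x, x ^ 2 * G x :=
        integral_add (hGint.add (hIabsG.const_mul 2)) hIx2G
      have h2 : (∫ x, (G x + 2 * (|x| * G x))) = (∫ x, G x) + ∫ x, 2 * (|x| * G x) :=
        integral_add hGint (hIabsG.const_mul 2)
      rw [h1, h2, integral_const_mul, hmass]
    have hIq : Integrable (fun x => (1 + x ^ 2) / 2 * G x) := by
      refine hmono _ (by fun_prop) (fun x => ?_)
      rw [abs_of_nonneg (by positivity)]
      have h3 := sq_le_w x
      have h4 := hw1 x
      linarith
    have habs : (∫ x, |x| * G x) ≤ (1 + ∫ x, x ^ 2 * G x) / 2 := by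
      have hmo : (∫ x, |x| * G x) ≤ ∫ x, (1 + x ^ 2) / 2 * G x :=
        integral_mono hIabsG hIq (fun x => mul_le_mul_of_nonneg_right
          (by nlinarith [sq_nonneg (|x| - 1), sq_abs x]) (hGnn x))
      have hvr : (∫ x, (1 + x ^ 2) / 2 * G x) = (1 + ∫ x, x ^ 2 * G x) / 2 := by
        rw [show (fun x => (1 + x ^ 2) / 2 * G x)
            = fun x => (1/2) * G x + (1/2) * (x ^ 2 * G x) from funext fun x => by ring]
        have h3 : (∫ x, ((1/2) * G x + (1/2) * (x ^ 2 * G x)))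
            = (∫ x, (1/2) * G x) + ∫ x, (1/2) * (x ^ 2 * G x) :=
          integral_add (hGint.const_mul (1/2)) (hIx2G.const_mul (1/2))
        rw [h3, integral_const_mul, integral_const_mul, hmass]
        ring
      linarith
    linarith

end
end

section
/- (i) Let γ ∈ (0,1) and let G ∈ 𝓔_γ with G ∈ L²(ℝ). Set Σ_γ(y) = ∫_ℝ |x−y|^γ G(x) dx and κ_γ = 2^{−γ} ∫_ℝ G(x)(1+|x|)^{−γ} dx. Then for every δ̃ ∈ (0,1) and every y ∈ ℝ: Σ_γ(y) ≥ κ_γ (1+|y|)^γ − (1 − δ̃^γ) − √(2δ̃) ‖G‖_{L²(ℝ)}. (ii) Moreover, for any family (G_γ)_{γ∈(0,1)} with G_γ ∈ 𝓔_γ, the corresponding κ_γ = 2^{−γ} ∫_ℝ G_γ(x)(1+|x|)^{−γ} dx satisfies κ_γ → 1 as γ → 0⁺. -/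
open MeasureTheory Real Set Filter

noncomputable section

lemma one_add_abs_pos (x : ℝ) : (0:ℝ) < 1 + |x| := by positivity

lemma rpow_neg_le_one {x γ : ℝ} (hγ : 0 ≤ γ) : (1 + |x|) ^ (-γ) ≤ 1 :=
  Real.rpow_le_one_of_one_le_of_nonpos (by simp [abs_nonneg]) (neg_nonpos.2 hγ)

lemma integrable_G_weight {G : ℝ → ℝ} (hInt : Integrable G) (hpos : ∀ x, 0 ≤ G x)
    (γ : ℝ) (hγ : 0 ≤ γ) : Integrable (fun x => G x * (1 + |x|) ^ (-γ)) := by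
  refine hInt.mono' ?_ ?_
  · exact hInt.aestronglyMeasurable.mul
      ((((continuous_const.add continuous_abs).rpow_const
        (fun x => Or.inl (one_add_abs_pos x).ne'))).aestronglyMeasurable)
  · refine Filter.Eventually.of_forall (fun x => ?_)
    have h1 : (0:ℝ) ≤ (1 + |x|) ^ (-γ) := Real.rpow_nonneg (one_add_abs_pos x).le _
    have := rpow_neg_le_one (x := x) hγ
    rw [Real.norm_eq_abs, abs_mul, abs_of_nonneg (hpos x), abs_of_nonneg h1]
    calc G x * (1 + |x|) ^ (-γ) ≤ G x * 1 := by
          exact mul_le_mul_of_nonneg_left this (hpos x)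
      _ = G x := mul_one _
    
lemma integrable_one_add_abs_mul {G : ℝ → ℝ} (hpos : ∀ x, 0 ≤ G x)
    (hInt : Integrable G)
    (hI3 : Integrable (fun x => (1 + |x|) ^ (3 : ℝ) * G x)) :
    Integrable (fun x => (1 + |x|) * G x) := by
  refine hI3.mono' ?_ ?_
  · exact ((continuous_const.add continuous_abs).aestronglyMeasurable).mul
      hInt.aestronglyMeasurable
  · refine Filter.Eventually.of_forall (fun x => ?_)
    have h1 : (1:ℝ) + |x| ≤ (1 + |x|) ^ (3:ℝ) := by
      nth_rewrite 1 [← Real.rpow_one (1 + |x|)]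
      exact Real.rpow_le_rpow_of_exponent_le (by simp [abs_nonneg]) (by norm_num)
    rw [Real.norm_eq_abs, abs_mul, abs_of_nonneg (hpos x),
      abs_of_nonneg (one_add_abs_pos x).le]
    exact mul_le_mul_of_nonneg_right h1 (hpos x)

lemma integrable_rpow_dist {G : ℝ → ℝ} (hpos : ∀ x, 0 ≤ G x)
    (hInt : Integrable G)
    (hI3 : Integrable (fun x => (1 + |x|) ^ (3 : ℝ) * G x))
    {γ : ℝ} (hγ0 : 0 ≤ γ) (hγ1 : γ ≤ 1) (y : ℝ) :
    Integrable (fun x => |x - y| ^ γ * G x) := by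
  have hbase : Integrable (fun x => (1 + |y|) * ((1 + |x|) * G x)) :=
    (integrable_one_add_abs_mul hpos hInt hI3).const_mul _
  refine hbase.mono' ?_ ?_
  · exact (((continuous_id.sub continuous_const).abs.rpow_const
      (fun x => Or.inr hγ0)).aestronglyMeasurable).mul hInt.aestronglyMeasurable
  · refine Filter.Eventually.of_forall (fun x => ?_)
    have h0 : (0:ℝ) ≤ |x - y| ^ γ := Real.rpow_nonneg (abs_nonneg _) _
    have hb : |x - y| ^ γ ≤ (1 + |y|) * (1 + |x|) := by
      have h1 : |x - y| ^ γ ≤ 1 + |x - y| := by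
        rcases le_total (|x - y|) 1 with h | h
        · calc |x - y| ^ γ ≤ 1 := Real.rpow_le_one (abs_nonneg _) h hγ0
            _ ≤ 1 + |x - y| := by simp [abs_nonneg]
        · calc |x - y| ^ γ ≤ |x - y| ^ (1:ℝ) :=
              Real.rpow_le_rpow_of_exponent_le h hγ1
            _ = |x - y| := Real.rpow_one _
            _ ≤ 1 + |x - y| := by linarith
      have h2 : |x - y| ≤ |x| + |y| := abs_sub _ _
      nlinarith [abs_nonneg x, abs_nonneg y]
    rw [Real.norm_eq_abs, abs_mul, abs_of_nonneg (hpos x), abs_of_nonneg h0]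
    exact (mul_le_mul_of_nonneg_right hb (hpos x)).trans_eq (mul_assoc _ _ _)

lemma part_i {γ : ℝ} (hγ : γ ∈ Ioo (0:ℝ) 1) {G : ℝ → ℝ} (hp : IsProfile γ G)
    (hL2 : Integrable (fun x => (G x)^2)) {δ : ℝ} (hδ : δ ∈ Ioo (0:ℝ) 1) (y : ℝ) :
    (∫ x, |x - y| ^ γ * G x) ≥
      ((2:ℝ) ^ (-γ) * ∫ x, G x * (1 + |x|) ^ (-γ)) * (1 + |y|) ^ γ
        - (1 - δ ^ γ) - Real.sqrt (2 * δ) * (∫ x, (G x) ^ 2) ^ ((1:ℝ)/2) := by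
  obtain ⟨hpos, hInt, hI3, hmass, hmom, hweak⟩ := hp
  obtain ⟨hγ0, hγ1⟩ := hγ
  obtain ⟨hδ0, hδ1⟩ := hδ
  set B := Metric.ball y δ with hB
  -- the coefficient function
  set c : ℝ → ℝ := fun x => (2:ℝ) ^ (-γ) * (1 + |y|) ^ γ * (1 + |x|) ^ (-γ) with hc
  have hceq : ∀ x, c x = ((1 + |y|) / (2 * (1 + |x|))) ^ γ := by
    intro x
    have h2 : (0:ℝ) < 2 ^ γ := Real.rpow_pos_of_pos two_pos γ
    have hx2 : (0:ℝ) < (1 + |x|) ^ γ := Real.rpow_pos_of_pos (one_add_abs_pos x) γ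
    simp only [hc]
    rw [Real.div_rpow (one_add_abs_pos y).le (by positivity),
      Real.mul_rpow (by norm_num : (0:ℝ) ≤ 2) (one_add_abs_pos x).le,
      Real.rpow_neg (by norm_num : (0:ℝ) ≤ 2),
      Real.rpow_neg (one_add_abs_pos x).le]
    field_simp
  have hcle : ∀ x, 1 + |y| ≤ 2 * (1 + |x|) → c x ≤ 1 := by
    intro x hx
    rw [hceq]
    exact Real.rpow_le_one (by positivity) (div_le_one_of_le₀ hx (by positivity)) hγ0.le
  -- pointwise key inequality
  have key : ∀ x, (c x - (1 - δ ^ γ)) * G x - B.indicator G x ≤ |x - y| ^ γ * G x := by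
    intro x
    have hGx := hpos x
    have hδγ : (0:ℝ) < δ ^ γ := Real.rpow_pos_of_pos hδ0 _
    have hδγ1 : δ ^ γ ≤ 1 := Real.rpow_le_one hδ0.le hδ1.le hγ0.le
    by_cases hxB : x ∈ B
    · have hd : |x - y| < δ := by simpa [hB, Metric.mem_ball, Real.dist_eq] using hxB
      have hcx : c x ≤ 1 := by
        refine hcle x ?_
        have h5 : |y| ≤ |x| + |x - y| := by
          have := abs_sub_abs_le_abs_sub y x
          have h2 : |y - x| = |x - y| := abs_sub_comm _ _
          linarith
        have hx0 := abs_nonneg x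
        linarith
      rw [indicator_of_mem hxB]
      have h1 : (c x - (1 - δ ^ γ)) * G x - G x = (c x - (1 - δ ^ γ) - 1) * G x := by ring
      rw [h1]
      have h2 : c x - (1 - δ ^ γ) - 1 ≤ 0 := by linarith
      have := Real.rpow_nonneg (abs_nonneg (x - y)) γ
      nlinarith
    · have hd : δ ≤ |x - y| := by
        by_contra h
        exact hxB (by simpa [hB, Metric.mem_ball, Real.dist_eq] using not_le.1 h)
      rw [indicator_of_notMem hxB, sub_zero]
      refine mul_le_mul_of_nonneg_right ?_ hGx
      rcases le_total (1 + |y|) (2 * (1 + |x|)) with hcase | hcase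
      · have h1 : δ ^ γ ≤ |x - y| ^ γ := Real.rpow_le_rpow hδ0.le hd hγ0.le
        have := hcle x hcase
        linarith
      · have h1 : (1 + |y|) / (2 * (1 + |x|)) ≤ |x - y| := by
          have hx1 : (1:ℝ) ≤ 1 + |x| := by simp [abs_nonneg]
          have h2 : (1 + |y|) / (2 * (1 + |x|)) ≤ (1 + |y|) / 2 := by
            apply div_le_div_of_nonneg_left (by positivity) (by norm_num)
            linarith
          have h3 : |y| - |x| ≤ |x - y| := by
            have := abs_sub_abs_le_abs_sub y x
            have h4 : |y - x| = |x - y| := abs_sub_comm _ _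
            linarith
          nlinarith
        have h2 : c x ≤ |x - y| ^ γ := by
          rw [hceq]
          exact Real.rpow_le_rpow (by positivity) h1 hγ0.le
        have h3 : 0 ≤ 1 - δ ^ γ := by linarith
        linarith
  -- integrability of pieces
  have hq : Integrable (fun x => G x * (1 + |x|) ^ (-γ)) :=
    integrable_G_weight hInt hpos γ hγ0.le
  have hcG : Integrable (fun x => (c x - (1 - δ ^ γ)) * G x) := by
    have h1 : Integrable (fun x => ((2:ℝ) ^ (-γ) * (1 + |y|) ^ γ) * (G x * (1 + |x|) ^ (-γ))) :=
      hq.const_mul _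
    have h2 : Integrable (fun x => (1 - δ ^ γ) * G x) := hInt.const_mul _
    have := h1.sub h2
    refine this.congr (Filter.Eventually.of_forall (fun x => ?_))
    simp only [Pi.sub_apply, hc]; ring
  have hind : Integrable (B.indicator G) := hInt.indicator Metric.isOpen_ball.measurableSet
  have hLHSint : Integrable (fun x => (c x - (1 - δ ^ γ)) * G x - B.indicator G x) :=
    hcG.sub hind
  have hRint : Integrable (fun x => |x - y| ^ γ * G x) :=
    integrable_rpow_dist hpos hInt hI3 hγ0.le hγ1.le y
  -- integrate
  have hmono : ∫ x, ((c x - (1 - δ ^ γ)) * G x - B.indicator G x) ≤ ∫ x, |x - y| ^ γ * G x :=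
    integral_mono hLHSint hRint key
  -- compute the left integral
  have hsplit : ∫ x, ((c x - (1 - δ ^ γ)) * G x - B.indicator G x)
      = ((2:ℝ) ^ (-γ) * ∫ x, G x * (1 + |x|) ^ (-γ)) * (1 + |y|) ^ γ - (1 - δ ^ γ)
        - ∫ x, B.indicator G x := by
    rw [integral_sub hcG hind]
    congr 1
    have h1 : ∀ x, (c x - (1 - δ ^ γ)) * G x
        = ((2:ℝ) ^ (-γ) * (1 + |y|) ^ γ) * (G x * (1 + |x|) ^ (-γ)) - (1 - δ ^ γ) * G x := by
      intro x; simp only [hc]; ring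
    rw [integral_congr_ae (Filter.Eventually.of_forall h1),
      integral_sub (hq.const_mul _) (hInt.const_mul _),
      integral_const_mul, integral_const_mul, hmass]
    ring
  -- bound the indicator integral
  have hindbound : ∫ x, B.indicator G x ≤ Real.sqrt (2 * δ) * (∫ x, (G x) ^ 2) ^ ((1:ℝ)/2) := by
    have hI0 : (0:ℝ) ≤ ∫ x, (G x) ^ 2 := integral_nonneg (fun x => sq_nonneg _)
    have hrw : (∫ x, (G x) ^ 2) ^ ((1:ℝ)/2) = Real.sqrt (∫ x, (G x) ^ 2) :=
      (Real.sqrt_eq_rpow _).symm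
    rw [hrw]
    rcases eq_or_lt_of_le hI0 with hI | hI
    · have hz := (integral_eq_zero_iff_of_nonneg (fun x => sq_nonneg (G x)) hL2).1 hI.symm
      have hind0 : (B.indicator G) =ᵐ[(volume : Measure ℝ)] 0 := by
        filter_upwards [hz] with x hx
        have hsq : (G x) ^ 2 = 0 := by simpa using hx
        have hx0 : G x = 0 := by
          exact (pow_eq_zero_iff (by norm_num : (2:ℕ) ≠ 0)).1 hsq
        simp [Set.indicator_apply, hx0]
      rw [integral_eq_zero_of_ae hind0]
      positivity
    · set a : ℝ := Real.sqrt (∫ x, (G x) ^ 2) / Real.sqrt (2 * δ) with ha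
      have h2δ0 : (0:ℝ) < 2 * δ := by linarith
      have hsq : (0:ℝ) < Real.sqrt (2 * δ) := Real.sqrt_pos.2 h2δ0
      have hsI : (0:ℝ) < Real.sqrt (∫ x, (G x) ^ 2) := Real.sqrt_pos.2 hI
      have ha0 : 0 < a := div_pos hsI hsq
      have hvol : (volume : Measure ℝ) B < ⊤ := by
        rw [hB, Real.volume_ball]; exact ENNReal.ofReal_lt_top
      have hindconst : Integrable (B.indicator (fun _ => a/2)) :=
        (integrableOn_const hvol.ne).integrable_indicator
          Metric.isOpen_ball.measurableSet
      have hint2 : Integrable (fun x => (1/(2*a)) * (G x) ^ 2 + B.indicator (fun _ => a/2) x) :=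
        (hL2.const_mul _).add hindconst
      have hmono2 : ∫ x, B.indicator G x
          ≤ ∫ x, ((1/(2*a)) * (G x) ^ 2 + B.indicator (fun _ => a/2) x) := by
        refine integral_mono hind hint2 (fun x => ?_)
        by_cases hx : x ∈ B
        · simp only [indicator_of_mem hx]
          have h1 : (0:ℝ) < 2*a := by linarith
          have h2 : G x * (2*a) ≤ (G x) ^ 2 + a ^ 2 := by nlinarith [sq_nonneg (G x - a)]
          have h3 : G x = (G x * (2*a))/(2*a) := by field_simp
          rw [h3, div_le_iff₀ h1]
          have h4 : (1/(2*a) * ((G x * (2*a))/(2*a)) ^ 2 + a/2) * (2*a)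
              = ((G x * (2*a))/(2*a)) ^ 2 + a ^ 2 := by field_simp
          rw [h4]
          have h5 : ((G x * (2*a))/(2*a)) = G x := by field_simp
          rw [h5]
          exact h2
        · simp only [indicator_of_notMem hx]
          positivity
      have hval : ∫ x, ((1/(2*a)) * (G x) ^ 2 + B.indicator (fun _ => a/2) x)
          = (1/(2*a)) * (∫ x, (G x) ^ 2) + (a/2) * (2*δ) := by
        rw [integral_add (hL2.const_mul _) hindconst, integral_const_mul,
          integral_indicator Metric.isOpen_ball.measurableSet, setIntegral_const,
          measureReal_def, Real.volume_ball, ENNReal.toReal_ofReal (by linarith : (0:ℝ) ≤ 2*δ)]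
        simp only [smul_eq_mul]; ring
      have hfinal : (1/(2*a)) * (∫ x, (G x) ^ 2) + (a/2) * (2*δ)
          = Real.sqrt (2 * δ) * Real.sqrt (∫ x, (G x) ^ 2) := by
        have hs2 : Real.sqrt (2*δ) * Real.sqrt (2*δ) = 2*δ := Real.mul_self_sqrt h2δ0.le
        have hsi2 : Real.sqrt (∫ x, (G x) ^ 2) * Real.sqrt (∫ x, (G x) ^ 2)
            = ∫ x, (G x) ^ 2 := Real.mul_self_sqrt hI0
        have key3 : ∀ s t : ℝ, 0 < s → 0 < t →
            1/(2*(t/s))*(t*t) + (t/s)/2*(s*s) = s*t := by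
          intro s t hs ht; field_simp; ring
        have hk := key3 _ _ hsq hsI
        rw [hs2, hsi2] at hk
        rw [ha]
        linarith [hk]
      rw [hval, hfinal] at hmono2
      exact hmono2
  rw [hsplit] at hmono
  linarith


lemma cube_eq (x : ℝ) : (1 + |x|) ^ (3:ℝ) = (1 + |x|) ^ (3:ℕ) := by
  rw [show (3:ℝ) = ((3:ℕ):ℝ) by norm_num, Real.rpow_natCast]

lemma rpow_abs_sub_le {γ : ℝ} (hγ0 : 0 ≤ γ) (hγ1 : γ ≤ 1) (x y : ℝ) :
    |x - y| ^ γ ≤ (1 + |x|) * (1 + |y|) := by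
  have h1 : |x - y| ^ γ ≤ 1 + |x - y| := by
    rcases le_total (|x - y|) 1 with h | h
    · calc |x - y| ^ γ ≤ 1 := Real.rpow_le_one (abs_nonneg _) h hγ0
        _ ≤ 1 + |x - y| := by simp [abs_nonneg]
    · calc |x - y| ^ γ ≤ |x - y| ^ (1:ℝ) := Real.rpow_le_rpow_of_exponent_le h hγ1
        _ = |x - y| := Real.rpow_one _
        _ ≤ 1 + |x - y| := by linarith
  have h2 : |x - y| ≤ |x| + |y| := abs_sub _ _
  nlinarith [abs_nonneg x, abs_nonneg y]

/-- derivative of the truncated square test function -/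
lemma phi_hasDeriv (R : ℝ) (hR : 0 < R) (x : ℝ) :
    HasDerivAt (fun x : ℝ => R^2 * x^2 / (R^2 + x^2))
      (2*R^4*x/(R^2+x^2)^2) x := by
  have hden : R^2 + x^2 ≠ 0 := by positivity
  have h1 : HasDerivAt (fun x : ℝ => R^2 * x^2) (R^2 * (2*x)) x := by
    simpa using (hasDerivAt_pow 2 x).const_mul (R^2)
  have h2 : HasDerivAt (fun x : ℝ => R^2 + x^2) (2*x) x := by
    simpa using (hasDerivAt_pow 2 x).const_add (R^2)
  have := h1.div h2 hden
  rw [show ((fun x : ℝ => R^2 * x^2) / fun x => R^2 + x^2) = fun x => R^2*x^2/(R^2+x^2)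
    from rfl] at this
  exact this.congr_deriv (by ring)

lemma phi_deriv (R : ℝ) (hR : 0 < R) :
    deriv (fun x : ℝ => R^2 * x^2 / (R^2 + x^2))
      = fun x => 2*R^4*x/(R^2+x^2)^2 := by
  funext x; exact (phi_hasDeriv R hR x).deriv

lemma phi_contDiff (R : ℝ) (hR : 0 < R) :
    ContDiff ℝ 1 (fun x : ℝ => R^2 * x^2 / (R^2 + x^2)) := by
  refine ContDiff.div ?_ ?_ ?_
  · exact contDiff_const.mul (contDiff_id.pow 2)
  · exact contDiff_const.add (contDiff_id.pow 2)
  · intro x; positivity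

lemma phi_nonneg (R x : ℝ) (hR : 0 < R) : 0 ≤ R^2 * x^2 / (R^2 + x^2) := by positivity

lemma phi_le_sq (R x : ℝ) (hR : 0 < R) : R^2 * x^2 / (R^2 + x^2) ≤ x^2 := by
  rw [div_le_iff₀ (by positivity)]
  nlinarith [sq_nonneg x, sq_nonneg R]

lemma phi_le_Rsq (R x : ℝ) (hR : 0 < R) : R^2 * x^2 / (R^2 + x^2) ≤ R^2 := by
  rw [div_le_iff₀ (by positivity)]
  nlinarith [sq_nonneg x, sq_nonneg R]

lemma phi_deriv_abs_le (R x : ℝ) (hR : 0 < R) : |2*R^4*x/(R^2+x^2)^2| ≤ R := by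
  rw [abs_div, abs_of_pos (by positivity : (0:ℝ) < (R^2+x^2)^2),
    div_le_iff₀ (by positivity : (0:ℝ) < (R^2+x^2)^2)]
  have h1 : |2*R^4*x| = 2*R^4*|x| := by
    rw [abs_mul, abs_of_pos (by positivity : (0:ℝ) < 2*R^4)]
  rw [h1]
  have e1 : 2*R*|x| ≤ R^2 + x^2 := by nlinarith [sq_nonneg (R - |x|), sq_abs x]
  have e2 : (2*R*|x|)*(R^2) ≤ (R^2+x^2)*(R^2+x^2) := by
    refine mul_le_mul e1 (by nlinarith [sq_nonneg x]) (by positivity) (by positivity)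
  nlinarith [mul_le_mul_of_nonneg_left e2 hR.le]

lemma xphi_deriv_le (R x : ℝ) (hR : 0 < R) :
    x * (2*R^4*x/(R^2+x^2)^2) ≤ 2*x^2 ∧ 0 ≤ x * (2*R^4*x/(R^2+x^2)^2) := by
  constructor
  · have h : x * (2*R^4*x/(R^2+x^2)^2) = 2*R^4*x^2/(R^2+x^2)^2 := by ring
    rw [h, div_le_iff₀ (by positivity)]
    nlinarith [sq_nonneg x, sq_nonneg R, sq_nonneg (x*R), sq_nonneg (x^2), sq_nonneg (R^2),
      mul_nonneg (sq_nonneg x) (sq_nonneg x)]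
  · have h : x * (2*R^4*x/(R^2+x^2)^2) = 2*R^4*x^2/(R^2+x^2)^2 := by ring
    rw [h]; positivity

lemma tendsto_phi_pt (t : ℝ) :
    Tendsto (fun n : ℕ => ((n:ℝ)+1)^2*t^2/(((n:ℝ)+1)^2+t^2)) atTop (nhds (t^2)) := by
  have hRn : Tendsto (fun n : ℕ => ((n:ℝ)+1)^2) atTop atTop := by
    apply tendsto_atTop_mono (fun n => ?_) tendsto_natCast_atTop_atTop
    nlinarith [Nat.cast_nonneg (α := ℝ) n]
  have h2 : Tendsto (fun n : ℕ => t^2/((n:ℝ)+1)^2) atTop (nhds 0) :=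
    Tendsto.div_atTop tendsto_const_nhds hRn
  have h3 : Tendsto (fun n : ℕ => t^2/(1+t^2/((n:ℝ)+1)^2)) atTop (nhds (t^2/(1+0))) :=
    Tendsto.div tendsto_const_nhds (tendsto_const_nhds.add h2) (by norm_num)
  have h3' : Tendsto (fun n : ℕ => t^2/(1+t^2/((n:ℝ)+1)^2)) atTop (nhds (t^2)) := by
    simpa using h3
  refine h3'.congr (fun n => ?_)
  have hp : (0:ℝ) < ((n:ℝ)+1)^2 := by positivity
  have hq : (0:ℝ) < ((n:ℝ)+1)^2 + t^2 := by positivity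
  field_simp

end

noncomputable section
open MeasureTheory Real Set Filter

lemma tendsto_frac_pt (t : ℝ) :
    Tendsto (fun n : ℕ => ((n:ℝ)+1)^2/(((n:ℝ)+1)^2+t^2)) atTop (nhds 1) := by
  have hRn : Tendsto (fun n : ℕ => ((n:ℝ)+1)^2) atTop atTop := by
    apply tendsto_atTop_mono (fun n => ?_) tendsto_natCast_atTop_atTop
    nlinarith [Nat.cast_nonneg (α := ℝ) n]
  have h2 : Tendsto (fun n : ℕ => t^2/((n:ℝ)+1)^2) atTop (nhds 0) :=
    Tendsto.div_atTop tendsto_const_nhds hRn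
  have h3 : Tendsto (fun n : ℕ => 1/(1+t^2/((n:ℝ)+1)^2)) atTop (nhds (1/(1+0))) :=
    Tendsto.div tendsto_const_nhds (tendsto_const_nhds.add h2) (by norm_num)
  have h3' : Tendsto (fun n : ℕ => 1/(1+t^2/((n:ℝ)+1)^2)) atTop (nhds 1) := by
    simpa using h3
  refine h3'.congr (fun n => ?_)
  have hp : (0:ℝ) < ((n:ℝ)+1)^2 := by positivity
  have hq : (0:ℝ) < ((n:ℝ)+1)^2 + t^2 := by positivity
  field_simp

set_option maxHeartbeats 1000000 in
lemma step1 {γ : ℝ} (hγ0 : 0 < γ) (hγ1 : γ < 1) {G : ℝ → ℝ} (hp : IsProfile γ G) :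
    (∫ z : ℝ × ℝ, |z.1 - z.2| ^ γ * (z.1 - z.2)^2 * (G z.1 * G z.2)
        ∂((volume : Measure ℝ).prod volume))
      = 2 * ∫ x, x^2 * G x := by
  obtain ⟨hpos, hInt, hI3, hmass, hmom, hweak⟩ := hp
  have hSM := hInt.aestronglyMeasurable
  have hx2G : Integrable (fun x => x^2 * G x) := by
    refine hI3.mono' ((continuous_pow 2).aestronglyMeasurable.mul hSM)
      (Filter.Eventually.of_forall fun x => ?_)
    have h1 : x^2 ≤ (1+|x|)^(3:ℕ) := by
      nlinarith [abs_nonneg x, sq_abs x, pow_nonneg (abs_nonneg x) 3]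
    rw [Real.norm_eq_abs, abs_mul, abs_of_nonneg (sq_nonneg x), abs_of_nonneg (hpos x), cube_eq]
    exact mul_le_mul_of_nonneg_right h1 (hpos x)
  have hGG : Integrable (fun z : ℝ×ℝ => G z.1 * G z.2)
      ((volume : Measure ℝ).prod volume) := hInt.mul_prod hInt
  have hBB : Integrable (fun z : ℝ×ℝ => ((1+|z.1|)^(3:ℝ) * G z.1) * ((1+|z.2|)^(3:ℝ) * G z.2))
      ((volume : Measure ℝ).prod volume) := hI3.mul_prod hI3
  have hKaesm : ∀ R : ℝ, 0 < R → AEStronglyMeasurable (fun z : ℝ×ℝ => |z.1 - z.2| ^ γ *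
      (2 * (R^2*((z.1+z.2)/2)^2/(R^2+((z.1+z.2)/2)^2)) - R^2*z.1^2/(R^2+z.1^2)
        - R^2*z.2^2/(R^2+z.2^2)) * G z.1 * G z.2) ((volume : Measure ℝ).prod volume) := by
    intro R hR
    have hφc : Continuous (fun x : ℝ => R^2*x^2/(R^2+x^2)) := (phi_contDiff R hR).continuous
    have hcc : Continuous (fun z : ℝ×ℝ => |z.1 - z.2| ^ γ *
        (2 * (R^2*((z.1+z.2)/2)^2/(R^2+((z.1+z.2)/2)^2)) - R^2*z.1^2/(R^2+z.1^2)
          - R^2*z.2^2/(R^2+z.2^2))) := by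
      refine Continuous.mul ?_ ?_
      · exact ((continuous_fst.sub continuous_snd).abs).rpow_const (fun z => Or.inr hγ0.le)
      · refine Continuous.sub (Continuous.sub ?_ ?_) ?_
        · exact continuous_const.mul (hφc.comp ((continuous_fst.add continuous_snd).div_const 2))
        · exact hφc.comp continuous_fst
        · exact hφc.comp continuous_snd
    refine (hcc.aestronglyMeasurable.mul hGG.aestronglyMeasurable).congr ?_
    exact Filter.Eventually.of_forall fun z => by simp only [Pi.mul_apply]; ring
  have hKbd : ∀ R : ℝ, 0 < R → ∀ z : ℝ×ℝ, ‖|z.1 - z.2| ^ γ *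
      (2 * (R^2*((z.1+z.2)/2)^2/(R^2+((z.1+z.2)/2)^2)) - R^2*z.1^2/(R^2+z.1^2)
        - R^2*z.2^2/(R^2+z.2^2)) * G z.1 * G z.2‖
      ≤ 2*(((1+|z.1|)^(3:ℝ) * G z.1) * ((1+|z.2|)^(3:ℝ) * G z.2)) := by
    intro R hR z
    set x := z.1
    set y := z.2
    clear_value x y
    set q : ℝ := 2 * (R^2*((x+y)/2)^2/(R^2+((x+y)/2)^2)) - R^2*x^2/(R^2+x^2)
      - R^2*y^2/(R^2+y^2) with hqdef
    have hA : |x - y| ^ γ ≤ (1+|x|)*(1+|y|) := rpow_abs_sub_le hγ0.le hγ1.le x y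
    have hA0 : (0:ℝ) ≤ |x - y| ^ γ := Real.rpow_nonneg (abs_nonneg _) _
    have hBub : q ≤ x^2 + y^2 := by
      have h1 := phi_le_sq R ((x+y)/2) hR
      have h2 := phi_nonneg R x hR
      have h3 := phi_nonneg R y hR
      have hm2 : ((x+y)/2)^2 ≤ (x^2+y^2)/2 := by nlinarith [sq_nonneg (x-y)]
      rw [hqdef]; linarith
    have hBlb : -(x^2+y^2) ≤ q := by
      have h1 := phi_nonneg R ((x+y)/2) hR
      have h2 := phi_le_sq R x hR
      have h3 := phi_le_sq R y hR
      rw [hqdef]; linarith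
    have hBabs : |q| ≤ x^2 + y^2 := abs_le.2 ⟨hBlb, hBub⟩
    have hsum : x^2 + y^2 ≤ 2*((1+|x|)^2*(1+|y|)^2) := by
      have hx1 : x^2 ≤ (1+|x|)^2 := by nlinarith [abs_nonneg x, sq_abs x]
      have hy1 : y^2 ≤ (1+|y|)^2 := by nlinarith [abs_nonneg y, sq_abs y]
      have h1x : (1:ℝ) ≤ (1+|x|)^2 := by nlinarith [abs_nonneg x]
      have h1y : (1:ℝ) ≤ (1+|y|)^2 := by nlinarith [abs_nonneg y]
      have e1 : x^2 ≤ (1+|x|)^2*(1+|y|)^2 := by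
        have := mul_le_mul hx1 h1y (by norm_num : (0:ℝ) ≤ 1) (sq_nonneg (1+|x|))
        simpa using this
      have e2 : y^2 ≤ (1+|x|)^2*(1+|y|)^2 := by
        have := mul_le_mul h1x hy1 (sq_nonneg y) (sq_nonneg (1+|x|))
        simpa using this
      linarith
    have h3 : |x - y| ^ γ * |q| ≤ 2*((1+|x|)^3*(1+|y|)^3) := by
      calc |x - y| ^ γ * |q| ≤ ((1+|x|)*(1+|y|)) * (x^2+y^2) :=
            mul_le_mul hA hBabs (abs_nonneg _) (by positivity)
        _ ≤ ((1+|x|)*(1+|y|)) * (2*((1+|x|)^2*(1+|y|)^2)) :=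
            mul_le_mul_of_nonneg_left hsum (by positivity)
        _ = 2*((1+|x|)^3*(1+|y|)^3) := by ring
    have hnorm : ‖|x - y| ^ γ * q * G x * G y‖ = |x - y| ^ γ * |q| * G x * G y := by
      rw [Real.norm_eq_abs, abs_mul, abs_mul, abs_mul, abs_of_nonneg hA0,
        abs_of_nonneg (hpos x), abs_of_nonneg (hpos y)]
    rw [hnorm, cube_eq, cube_eq]
    calc |x - y| ^ γ * |q| * G x * G y
        ≤ (2*((1+|x|)^3*(1+|y|)^3)) * G x * G y := by
          refine mul_le_mul_of_nonneg_right (mul_le_mul_of_nonneg_right h3 (hpos x)) (hpos y)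
      _ = 2*((1+|x|)^(3:ℕ)*G x * ((1+|y|)^(3:ℕ)*G y)) := by ring
  -- the per-n identity
  have hEq : ∀ n : ℕ,
      -(1/4) * (∫ x, x * (2*((n:ℝ)+1)^4*x/((((n:ℝ)+1)^2+x^2)^2)) * G x)
      = (1/2) * ∫ z : ℝ × ℝ, |z.1 - z.2| ^ γ *
          (2 * (((n:ℝ)+1)^2*((z.1+z.2)/2)^2/(((n:ℝ)+1)^2+((z.1+z.2)/2)^2))
           - ((n:ℝ)+1)^2*z.1^2/(((n:ℝ)+1)^2+z.1^2)
           - ((n:ℝ)+1)^2*z.2^2/(((n:ℝ)+1)^2+z.2^2)) * G z.1 * G z.2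
          ∂((volume : Measure ℝ).prod volume) := by
    intro n
    set R : ℝ := (n:ℝ)+1 with hRdef
    have hR : (0:ℝ) < R := by positivity
    have hb : ∃ M, ∀ x, |(fun x : ℝ => R^2*x^2/(R^2+x^2)) x| ≤ M
        ∧ |deriv (fun x : ℝ => R^2*x^2/(R^2+x^2)) x| ≤ M := by
      refine ⟨R^2 + R, fun x => ⟨?_, ?_⟩⟩
      · rw [abs_of_nonneg (phi_nonneg R x hR)]
        have := phi_le_Rsq R x hR
        linarith
      · rw [phi_deriv R hR]
        have := phi_deriv_abs_le R x hR
        nlinarith [sq_nonneg R]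
    have h := hweak (fun x : ℝ => R^2*x^2/(R^2+x^2)) (phi_contDiff R hR) hb
    rw [phi_deriv R hR] at h
    simp only [] at h
    -- integrability on the product space
    have hKint : Integrable (Function.uncurry (fun x y : ℝ => |x - y| ^ γ *
        (2 * (R^2*((x+y)/2)^2/(R^2+((x+y)/2)^2)) - R^2*x^2/(R^2+x^2) - R^2*y^2/(R^2+y^2))
        * G x * G y)) ((volume : Measure ℝ).prod volume) :=
      Integrable.mono' (hBB.const_mul 2) (hKaesm R hR)
        (Filter.Eventually.of_forall (hKbd R hR))
    rw [integral_integral hKint] at h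
    exact h
  -- LHS convergence
  have hLHS : Tendsto (fun n : ℕ => ∫ x, x * (2*((n:ℝ)+1)^4*x/((((n:ℝ)+1)^2+x^2)^2)) * G x)
      atTop (nhds (∫ x, 2*(x^2*G x))) := by
    refine tendsto_integral_of_dominated_convergence (fun x => 2*(x^2*G x)) ?_
      (hx2G.const_mul 2) ?_ ?_
    · intro n
      have hd : Continuous (fun x : ℝ => 2*((n:ℝ)+1)^4*x/((((n:ℝ)+1)^2+x^2)^2)) := by
        refine Continuous.div (continuous_const.mul continuous_id)
          ((continuous_const.add (continuous_pow 2)).pow 2) (fun x => by positivity)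
      exact ((continuous_id.mul hd).aestronglyMeasurable).mul hSM
    · intro n
      refine Filter.Eventually.of_forall fun x => ?_
      have hR : (0:ℝ) < (n:ℝ)+1 := by positivity
      have h1 := (xphi_deriv_le ((n:ℝ)+1) x hR).1
      have h2 := (xphi_deriv_le ((n:ℝ)+1) x hR).2
      rw [Real.norm_eq_abs, abs_mul, abs_of_nonneg h2, abs_of_nonneg (hpos x)]
      exact le_trans (mul_le_mul_of_nonneg_right h1 (hpos x)) (le_of_eq (by ring))
    · refine Filter.Eventually.of_forall fun x => ?_
      have h : Tendsto (fun n : ℕ =>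
          2*((((n:ℝ)+1)^2*x^2/(((n:ℝ)+1)^2+x^2)) * (((n:ℝ)+1)^2/(((n:ℝ)+1)^2+x^2)))*G x)
          atTop (nhds ((2*(x^2*1))*G x)) :=
        (((tendsto_phi_pt x).mul (tendsto_frac_pt x)).const_mul 2).mul_const (G x)
      have h2 : (2*(x^2*1))*G x = 2*(x^2*G x) := by ring
      rw [← h2]
      refine h.congr (fun n => ?_)
      have hp : (0:ℝ) < ((n:ℝ)+1)^2 + x^2 := by positivity
      field_simp
  -- RHS convergence
  have hRHS : Tendsto (fun n : ℕ => ∫ z : ℝ × ℝ, |z.1 - z.2| ^ γ *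
          (2 * (((n:ℝ)+1)^2*((z.1+z.2)/2)^2/(((n:ℝ)+1)^2+((z.1+z.2)/2)^2))
           - ((n:ℝ)+1)^2*z.1^2/(((n:ℝ)+1)^2+z.1^2)
           - ((n:ℝ)+1)^2*z.2^2/(((n:ℝ)+1)^2+z.2^2)) * G z.1 * G z.2
          ∂((volume : Measure ℝ).prod volume))
      atTop (nhds (∫ z : ℝ × ℝ, |z.1 - z.2| ^ γ *
          (2*((z.1+z.2)/2)^2 - z.1^2 - z.2^2) * G z.1 * G z.2
          ∂((volume : Measure ℝ).prod volume))) := by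
    refine tendsto_integral_of_dominated_convergence
      (fun z : ℝ×ℝ => 2*(((1+|z.1|)^(3:ℝ) * G z.1) * ((1+|z.2|)^(3:ℝ) * G z.2)))
      (fun n => hKaesm ((n:ℝ)+1) (by positivity)) (hBB.const_mul 2)
      (fun n => Filter.Eventually.of_forall (hKbd ((n:ℝ)+1) (by positivity))) ?_
    refine Filter.Eventually.of_forall fun z => ?_
    have inner : Tendsto (fun n : ℕ =>
        2 * (((n:ℝ)+1)^2*((z.1+z.2)/2)^2/(((n:ℝ)+1)^2+((z.1+z.2)/2)^2))
         - ((n:ℝ)+1)^2*z.1^2/(((n:ℝ)+1)^2+z.1^2)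
         - ((n:ℝ)+1)^2*z.2^2/(((n:ℝ)+1)^2+z.2^2)) atTop
        (nhds (2*((z.1+z.2)/2)^2 - z.1^2 - z.2^2)) :=
      (((tendsto_phi_pt ((z.1+z.2)/2)).const_mul 2).sub (tendsto_phi_pt z.1)).sub
        (tendsto_phi_pt z.2)
    exact ((inner.const_mul (|z.1 - z.2| ^ γ)).mul_const (G z.1)).mul_const (G z.2)
  have t1 := hLHS.const_mul (-(1/4) : ℝ)
  have t2 := hRHS.const_mul ((1/2) : ℝ)
  have hconv := tendsto_nhds_unique (t1.congr hEq) t2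
  have hrw2 : (fun z : ℝ × ℝ => |z.1 - z.2| ^ γ *
      (2*((z.1+z.2)/2)^2 - z.1^2 - z.2^2) * G z.1 * G z.2)
      = fun z : ℝ × ℝ => (-(1/2) : ℝ) * (|z.1 - z.2| ^ γ * (z.1 - z.2)^2 * (G z.1 * G z.2)) := by
    funext z; ring
  rw [hrw2, integral_const_mul, integral_const_mul] at hconv
  linarith

end

noncomputable section
open MeasureTheory Real Set Filter

lemma integrable_sq_mul {G : ℝ → ℝ} (hpos : ∀ x, 0 ≤ G x) (hInt : Integrable G)
    (hI3 : Integrable (fun x => (1 + |x|) ^ (3:ℝ) * G x)) :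
    Integrable (fun x => x^2 * G x) := by
  refine hI3.mono' ((continuous_pow 2).aestronglyMeasurable.mul hInt.aestronglyMeasurable)
    (Filter.Eventually.of_forall fun x => ?_)
  have h1 : x^2 ≤ (1+|x|)^(3:ℕ) := by
    nlinarith [abs_nonneg x, sq_abs x, pow_nonneg (abs_nonneg x) 3]
  rw [Real.norm_eq_abs, abs_mul, abs_of_nonneg (sq_nonneg x), abs_of_nonneg (hpos x), cube_eq]
  exact mul_le_mul_of_nonneg_right h1 (hpos x)

lemma integrable_id_mul {G : ℝ → ℝ} (hpos : ∀ x, 0 ≤ G x) (hInt : Integrable G)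
    (hI3 : Integrable (fun x => (1 + |x|) ^ (3:ℝ) * G x)) :
    Integrable (fun x => x * G x) := by
  refine hI3.mono' (continuous_id.aestronglyMeasurable.mul hInt.aestronglyMeasurable)
    (Filter.Eventually.of_forall fun x => ?_)
  have h1 : |x| ≤ (1+|x|)^(3:ℕ) := by
    nlinarith [abs_nonneg x, sq_abs x, pow_nonneg (abs_nonneg x) 3]
  rw [Real.norm_eq_abs, abs_mul, cube_eq]
  exact mul_le_mul_of_nonneg_right h1 (hpos x) |>.trans_eq' (by rw [abs_of_nonneg (hpos x)])

lemma step2 {G : ℝ → ℝ} (hpos : ∀ x, 0 ≤ G x) (hInt : Integrable G)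
    (hI3 : Integrable (fun x => (1 + |x|) ^ (3:ℝ) * G x))
    (hmass : (∫ x, G x) = 1) (hmom : (∫ x, x * G x) = 0) :
    (∫ z : ℝ×ℝ, (z.1 - z.2)^2 * (G z.1 * G z.2) ∂((volume : Measure ℝ).prod volume))
      = 2 * ∫ x, x^2 * G x := by
  have hx2G := integrable_sq_mul hpos hInt hI3
  have hxG := integrable_id_mul hpos hInt hI3
  have ia : Integrable (fun z : ℝ×ℝ => (fun x => x^2 * G x) z.1 * G z.2)
      ((volume : Measure ℝ).prod volume) := hx2G.mul_prod hInt
  have ib : Integrable (fun z : ℝ×ℝ => G z.1 * (fun x => x^2 * G x) z.2)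
      ((volume : Measure ℝ).prod volume) := hInt.mul_prod hx2G
  have ic : Integrable (fun z : ℝ×ℝ => (fun x => x * G x) z.1 * (fun x => x * G x) z.2)
      ((volume : Measure ℝ).prod volume) := hxG.mul_prod hxG
  have e : (fun z : ℝ×ℝ => (z.1 - z.2)^2 * (G z.1 * G z.2))
      = fun z : ℝ×ℝ => ((fun x => x^2 * G x) z.1 * G z.2 + G z.1 * (fun x => x^2 * G x) z.2)
        - (2:ℝ) * ((fun x => x * G x) z.1 * (fun x => x * G x) z.2) := by
    funext z; simp only []; ring
  have iab : Integrable (fun z : ℝ×ℝ =>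
      (fun x => x^2 * G x) z.1 * G z.2 + G z.1 * (fun x => x^2 * G x) z.2)
      ((volume : Measure ℝ).prod volume) := ia.add ib
  have icc : Integrable (fun z : ℝ×ℝ =>
      (2:ℝ) * ((fun x => x * G x) z.1 * (fun x => x * G x) z.2))
      ((volume : Measure ℝ).prod volume) := ic.const_mul 2
  rw [e, integral_sub iab icc, integral_add ia ib, integral_const_mul,
    integral_prod_mul (fun x : ℝ => x^2 * G x) G, integral_prod_mul G (fun x : ℝ => x^2 * G x),
    integral_prod_mul (fun x : ℝ => x * G x) (fun x : ℝ => x * G x), hmass, hmom]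
  ring

lemma small_t {γ t : ℝ} (hγ0 : 0 < γ) (ht0 : 0 ≤ t) (ht1 : t ≤ 1) :
    t^2 * (1 - t^γ) ≤ γ := by
  rcases eq_or_lt_of_le ht0 with h | ht
  · rw [← h]; norm_num; exact hγ0.le
  · have hlog : 1 - t^γ ≤ γ * (-Real.log t) := by
      have h1 := Real.add_one_le_exp (Real.log t * γ)
      rw [← Real.rpow_def_of_pos ht] at h1
      nlinarith
    have hlog2 : -Real.log t ≤ t⁻¹ := by
      have := Real.log_le_sub_one_of_pos (inv_pos.2 ht)
      rw [Real.log_inv] at this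
      have : (0:ℝ) < t⁻¹ := inv_pos.2 ht
      have h2 := Real.log_le_sub_one_of_pos (inv_pos.2 ht)
      rw [Real.log_inv] at h2
      linarith
    have h3 : 1 - t^γ ≤ γ * t⁻¹ :=
      hlog.trans (mul_le_mul_of_nonneg_left hlog2 hγ0.le)
    have h4 : t^2 * (1 - t^γ) ≤ t^2 * (γ * t⁻¹) :=
      mul_le_mul_of_nonneg_left h3 (sq_nonneg t)
    have h5 : t^2 * (γ * t⁻¹) = γ * t := by field_simp
    have h6 : γ * t ≤ γ * 1 := mul_le_mul_of_nonneg_left ht1 hγ0.le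
    rw [h5] at h4
    linarith

lemma big_t {γ t : ℝ} (hγ0 : 0 < γ) (ht : 1 ≤ t) :
    γ * Real.log t ≤ t^γ - 1 := by
  have h1 := Real.add_one_le_exp (Real.log t * γ)
  rw [← Real.rpow_def_of_pos (by linarith : (0:ℝ) < t)] at h1
  nlinarith

lemma log_ge_one {t : ℝ} (ht : 3 ≤ t) : 1 ≤ Real.log t := by
  rw [Real.le_log_iff_exp_le (by linarith : (0:ℝ) < t)]
  have := Real.exp_one_lt_d9
  linarith

end

noncomputable section
open MeasureTheory Real Set Filter

lemma abs_sub_le_prod (x y : ℝ) : |x - y| ≤ (1+|x|)*(1+|y|) := by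
  have := abs_sub x y
  nlinarith [abs_nonneg x, abs_nonneg y, mul_nonneg (abs_nonneg x) (abs_nonneg y)]

lemma one_le_prod (x y : ℝ) : (1:ℝ) ≤ (1+|x|)*(1+|y|) := by
  nlinarith [abs_nonneg x, abs_nonneg y, mul_nonneg (abs_nonneg x) (abs_nonneg y)]

lemma sq_sub_le (x y : ℝ) : (x - y)^2 ≤ ((1+|x|)^(3:ℕ))*((1+|y|)^(3:ℕ)) := by
  have h2 : (x-y)^2 ≤ ((1+|x|)*(1+|y|))^2 := by
    rw [← sq_abs (x-y)]
    exact pow_le_pow_left₀ (abs_nonneg _) (abs_sub_le_prod x y) 2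
  have h3 : ((1+|x|)*(1+|y|))^2 ≤ ((1+|x|)*(1+|y|))^3 :=
    pow_le_pow_right₀ (one_le_prod x y) (by norm_num)
  calc (x-y)^2 ≤ ((1+|x|)*(1+|y|))^3 := h2.trans h3
    _ = ((1+|x|)^(3:ℕ))*((1+|y|)^(3:ℕ)) := by ring

lemma cube_sub_le (x y : ℝ) : |x - y|^(3:ℕ) ≤ ((1+|x|)^(3:ℕ))*((1+|y|)^(3:ℕ)) := by
  have h2 : |x-y|^3 ≤ ((1+|x|)*(1+|y|))^3 :=
    pow_le_pow_left₀ (abs_nonneg _) (abs_sub_le_prod x y) 3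
  calc |x-y|^3 ≤ ((1+|x|)*(1+|y|))^3 := h2
    _ = ((1+|x|)^(3:ℕ))*((1+|y|)^(3:ℕ)) := by ring

lemma rpow_sq_sub_le {γ : ℝ} (hγ0 : 0 < γ) (hγ1 : γ < 1) (x y : ℝ) :
    |x - y|^γ * (x - y)^2 ≤ ((1+|x|)^(3:ℕ))*((1+|y|)^(3:ℕ)) := by
  have hA := rpow_abs_sub_le hγ0.le hγ1.le x y
  have h2 : (x-y)^2 ≤ ((1+|x|)*(1+|y|))^2 := by
    rw [← sq_abs (x-y)]
    exact pow_le_pow_left₀ (abs_nonneg _) (abs_sub_le_prod x y) 2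
  calc |x - y|^γ * (x - y)^2 ≤ ((1+|x|)*(1+|y|)) * ((1+|x|)*(1+|y|))^2 :=
        mul_le_mul hA h2 (sq_nonneg _) (by positivity)
    _ = ((1+|x|)^(3:ℕ))*((1+|y|)^(3:ℕ)) := by ring

set_option maxHeartbeats 1000000 in
lemma second_moment_le {γ : ℝ} (hγ0 : 0 < γ) (hγ1 : γ < 1) {G : ℝ → ℝ}
    (hp : IsProfile γ G) : ∫ x, x^2 * G x ≤ 5 := by
  have h1 := step1 hγ0 hγ1 hp
  obtain ⟨hpos, hInt, hI3, hmass, hmom, hweak⟩ := hp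
  have h2 := step2 hpos hInt hI3 hmass hmom
  set μ : Measure (ℝ×ℝ) := (volume : Measure ℝ).prod (volume : Measure ℝ) with hμdef
  have hGG : Integrable (fun z : ℝ×ℝ => G z.1 * G z.2) μ := hInt.mul_prod hInt
  have hBB : Integrable (fun z : ℝ×ℝ => ((1+|z.1|)^(3:ℝ)*G z.1) * ((1+|z.2|)^(3:ℝ)*G z.2)) μ :=
    hI3.mul_prod hI3
  have hw0 : ∀ z : ℝ×ℝ, 0 ≤ G z.1 * G z.2 := fun z => mul_nonneg (hpos z.1) (hpos z.2)
  have hwint : ∫ z : ℝ×ℝ, G z.1 * G z.2 ∂μ = 1 := by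
    rw [hμdef, integral_prod_mul G G, hmass]; norm_num
  have hFc : Continuous (fun z : ℝ×ℝ => |z.1 - z.2|) := (continuous_fst.sub continuous_snd).abs
  -- integrability of g1, g2
  have hBBz : ∀ z : ℝ×ℝ, ((1+|z.1|)^(3:ℝ)*G z.1) * ((1+|z.2|)^(3:ℝ)*G z.2)
      = (((1+|z.1|)^(3:ℕ))*((1+|z.2|)^(3:ℕ))) * (G z.1 * G z.2) := by
    intro z; rw [cube_eq, cube_eq]; ring
  have hg2 : Integrable (fun z : ℝ×ℝ => (z.1-z.2)^2 * (G z.1 * G z.2)) μ := by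
    refine hBB.mono' (((hFc.pow 2).aestronglyMeasurable.mul hGG.aestronglyMeasurable).congr
      (Filter.Eventually.of_forall fun z => by simp only [Pi.mul_apply, Pi.pow_apply]; rw [sq_abs]))
      (Filter.Eventually.of_forall fun z => ?_)
    rw [Real.norm_eq_abs, abs_mul, abs_of_nonneg (sq_nonneg _), abs_of_nonneg (hw0 z), hBBz]
    exact mul_le_mul_of_nonneg_right (sq_sub_le z.1 z.2) (hw0 z)
  have hg1 : Integrable (fun z : ℝ×ℝ => |z.1-z.2|^γ * (z.1-z.2)^2 * (G z.1 * G z.2)) μ := by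
    have hc : Continuous (fun z : ℝ×ℝ => |z.1-z.2|^γ * (z.1-z.2)^2) :=
      (hFc.rpow_const (fun z => Or.inr hγ0.le)).mul ((continuous_fst.sub continuous_snd).pow 2)
    refine hBB.mono' ((hc.aestronglyMeasurable.mul hGG.aestronglyMeasurable).congr
      (Filter.Eventually.of_forall fun z => by simp only [Pi.mul_apply]))
      (Filter.Eventually.of_forall fun z => ?_)
    have hnn : (0:ℝ) ≤ |z.1-z.2|^γ * (z.1-z.2)^2 :=
      mul_nonneg (Real.rpow_nonneg (abs_nonneg _) _) (sq_nonneg _)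
    rw [Real.norm_eq_abs, abs_mul, abs_of_nonneg hnn, abs_of_nonneg (hw0 z), hBBz]
    exact mul_le_mul_of_nonneg_right (rpow_sq_sub_le hγ0 hγ1 z.1 z.2) (hw0 z)
  -- sets
  set S : Set (ℝ×ℝ) := {z | |z.1 - z.2| ≤ 1} with hSdef
  set T : Set (ℝ×ℝ) := {z | 3 ≤ |z.1 - z.2|} with hTdef
  have hSmeas : MeasurableSet S := (isClosed_le hFc continuous_const).measurableSet
  have hTmeas : MeasurableSet T := (isClosed_le continuous_const hFc).measurableSet
  have hT_sub : T ⊆ Sᶜ := by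
    intro z hz
    simp only [hSdef, hTdef, mem_setOf_eq, mem_compl_iff, not_le] at *
    linarith
  -- zero total integral of g1 - g2
  have hdzero : ∫ z : ℝ×ℝ, (|z.1-z.2|^γ * (z.1-z.2)^2 * (G z.1 * G z.2)
      - (z.1-z.2)^2 * (G z.1 * G z.2)) ∂μ = 0 := by
    have e1 : ∫ z : ℝ×ℝ, (|z.1-z.2|^γ * (z.1-z.2)^2 * (G z.1 * G z.2)
        - (z.1-z.2)^2 * (G z.1 * G z.2)) ∂μ
        = (∫ z : ℝ×ℝ, |z.1-z.2|^γ * (z.1-z.2)^2 * (G z.1 * G z.2) ∂μ)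
          - ∫ z : ℝ×ℝ, (z.1-z.2)^2 * (G z.1 * G z.2) ∂μ := integral_sub hg1 hg2
    rw [e1, h1, h2]; ring
  have hsplit : (∫ z in S, (|z.1-z.2|^γ * (z.1-z.2)^2 * (G z.1 * G z.2)
      - (z.1-z.2)^2 * (G z.1 * G z.2)) ∂μ)
      + (∫ z in Sᶜ, (|z.1-z.2|^γ * (z.1-z.2)^2 * (G z.1 * G z.2)
      - (z.1-z.2)^2 * (G z.1 * G z.2)) ∂μ) = 0 := by
    rw [← hdzero]
    exact integral_add_compl hSmeas (hg1.sub hg2)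
  -- the small-distance bound
  have hS_le : ∫ z in S, ((z.1-z.2)^2 * (G z.1 * G z.2)
      - |z.1-z.2|^γ * (z.1-z.2)^2 * (G z.1 * G z.2)) ∂μ ≤ γ := by
    have step_a : ∫ z in S, ((z.1-z.2)^2 * (G z.1 * G z.2)
        - |z.1-z.2|^γ * (z.1-z.2)^2 * (G z.1 * G z.2)) ∂μ
        ≤ ∫ z in S, γ * (G z.1 * G z.2) ∂μ := by
      refine setIntegral_mono_on ((hg2.sub hg1).integrableOn)
        ((hGG.const_mul γ).integrableOn) hSmeas (fun z hz => ?_)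
      have ht1 : |z.1 - z.2| ≤ 1 := hz
      have hcl := small_t hγ0 (abs_nonneg (z.1-z.2)) ht1
      have he : (z.1-z.2)^2 * (G z.1 * G z.2) - |z.1-z.2|^γ * (z.1-z.2)^2 * (G z.1 * G z.2)
          = (|z.1-z.2|^2 * (1 - |z.1-z.2|^γ)) * (G z.1 * G z.2) := by
        rw [sq_abs]; ring
      rw [he]
      exact mul_le_mul_of_nonneg_right hcl (hw0 z)
    have step_b : ∫ z in S, γ * (G z.1 * G z.2) ∂μ ≤ γ * 1 := by
      rw [integral_const_mul]
      refine mul_le_mul_of_nonneg_left ?_ hγ0.le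
      rw [← hwint]
      exact setIntegral_le_integral hGG (Filter.Eventually.of_forall hw0)
    linarith
  -- consequence: integral over complement is ≤ γ
  have hSc : ∫ z in Sᶜ, (|z.1-z.2|^γ * (z.1-z.2)^2 * (G z.1 * G z.2)
      - (z.1-z.2)^2 * (G z.1 * G z.2)) ∂μ ≤ γ := by
    have i1 : ∫ z in S, (|z.1-z.2|^γ * (z.1-z.2)^2 * (G z.1 * G z.2)
        - (z.1-z.2)^2 * (G z.1 * G z.2)) ∂μ
        = (∫ z in S, |z.1-z.2|^γ * (z.1-z.2)^2 * (G z.1 * G z.2) ∂μ)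
          - ∫ z in S, (z.1-z.2)^2 * (G z.1 * G z.2) ∂μ :=
      integral_sub hg1.integrableOn hg2.integrableOn
    have i2 : ∫ z in S, ((z.1-z.2)^2 * (G z.1 * G z.2)
        - |z.1-z.2|^γ * (z.1-z.2)^2 * (G z.1 * G z.2)) ∂μ
        = (∫ z in S, (z.1-z.2)^2 * (G z.1 * G z.2) ∂μ)
          - ∫ z in S, |z.1-z.2|^γ * (z.1-z.2)^2 * (G z.1 * G z.2) ∂μ :=
      integral_sub hg2.integrableOn hg1.integrableOn
    linarith
  -- log integrability on Sᶜ
  have hlogint : IntegrableOn (fun z : ℝ×ℝ =>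
      (z.1-z.2)^2 * Real.log |z.1-z.2| * (G z.1*G z.2)) Sᶜ μ := by
    have m1 : Measurable (fun z : ℝ×ℝ => (z.1-z.2)^2 * Real.log |z.1-z.2|) :=
      (((continuous_fst.sub continuous_snd).pow 2).measurable).mul
        (Real.measurable_log.comp hFc.measurable)
    refine Integrable.mono' (hBB.restrict)
      ((m1.aestronglyMeasurable.mul hGG.aestronglyMeasurable).restrict.congr
        (Filter.Eventually.of_forall fun z => by simp only [Pi.mul_apply])) ?_
    refine (ae_restrict_iff' hSmeas.compl).2 (Filter.Eventually.of_forall fun z hz => ?_)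
    have ht : 1 < |z.1 - z.2| := by
      simp only [hSdef, mem_compl_iff, mem_setOf_eq, not_le] at hz
      exact hz
    have hlog0 : 0 ≤ Real.log |z.1-z.2| := Real.log_nonneg ht.le
    have hloglt : Real.log |z.1-z.2| ≤ |z.1-z.2| := by
      have := Real.log_le_sub_one_of_pos (by linarith : (0:ℝ) < |z.1-z.2|)
      linarith
    have hnn : (0:ℝ) ≤ (z.1-z.2)^2 * Real.log |z.1-z.2| :=
      mul_nonneg (sq_nonneg _) hlog0
    rw [Real.norm_eq_abs, abs_mul, abs_of_nonneg hnn, abs_of_nonneg (hw0 z), hBBz]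
    refine mul_le_mul_of_nonneg_right ?_ (hw0 z)
    calc (z.1-z.2)^2 * Real.log |z.1-z.2| ≤ (z.1-z.2)^2 * |z.1-z.2| :=
          mul_le_mul_of_nonneg_left hloglt (sq_nonneg _)
      _ = |z.1-z.2|^(3:ℕ) := by rw [← sq_abs]; ring
      _ ≤ ((1+|z.1|)^(3:ℕ))*((1+|z.2|)^(3:ℕ)) := cube_sub_le z.1 z.2
  -- key log bound
  have hkey : ∫ z in Sᶜ, (z.1-z.2)^2 * Real.log |z.1-z.2| * (G z.1*G z.2) ∂μ ≤ 1 := by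
    have hmono : ∫ z in Sᶜ, γ * ((z.1-z.2)^2 * Real.log |z.1-z.2| * (G z.1*G z.2)) ∂μ
        ≤ ∫ z in Sᶜ, (|z.1-z.2|^γ * (z.1-z.2)^2 * (G z.1 * G z.2)
          - (z.1-z.2)^2 * (G z.1 * G z.2)) ∂μ := by
      refine setIntegral_mono_on (hlogint.const_mul γ)
        ((hg1.sub hg2).integrableOn) hSmeas.compl (fun z hz => ?_)
      have ht : 1 < |z.1 - z.2| := by
        simp only [hSdef, mem_compl_iff, mem_setOf_eq, not_le] at hz
        exact hz
      have hb := big_t hγ0 ht.le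
      have hrw : |z.1-z.2|^γ * (z.1-z.2)^2 * (G z.1 * G z.2)
          - (z.1-z.2)^2 * (G z.1 * G z.2)
          = (|z.1-z.2|^γ - 1) * ((z.1-z.2)^2 * (G z.1 * G z.2)) := by ring
      have hrw2 : γ * ((z.1-z.2)^2 * Real.log |z.1-z.2| * (G z.1*G z.2))
          = (γ * Real.log |z.1-z.2|) * ((z.1-z.2)^2 * (G z.1 * G z.2)) := by ring
      rw [hrw, hrw2]
      exact mul_le_mul_of_nonneg_right hb (mul_nonneg (sq_nonneg _) (hw0 z))
    rw [integral_const_mul] at hmono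
    have := hmono.trans hSc
    nlinarith [hγ0]
  -- tails
  have hTbound : ∫ z in T, (z.1-z.2)^2 * (G z.1 * G z.2) ∂μ ≤ 1 := by
    have s1 : ∫ z in T, (z.1-z.2)^2 * (G z.1 * G z.2) ∂μ
        ≤ ∫ z in T, (z.1-z.2)^2 * Real.log |z.1-z.2| * (G z.1*G z.2) ∂μ := by
      refine setIntegral_mono_on hg2.integrableOn (hlogint.mono_set hT_sub) hTmeas
        (fun z hz => ?_)
      have ht : (3:ℝ) ≤ |z.1 - z.2| := hz
      have hlg := log_ge_one ht
      have : (z.1-z.2)^2 * 1 * (G z.1 * G z.2) ≤ (z.1-z.2)^2 * Real.log |z.1-z.2|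
          * (G z.1 * G z.2) :=
        mul_le_mul_of_nonneg_right
          (mul_le_mul_of_nonneg_left hlg (sq_nonneg _)) (hw0 z)
      linarith [this]
    have s2 : ∫ z in T, (z.1-z.2)^2 * Real.log |z.1-z.2| * (G z.1*G z.2) ∂μ
        ≤ ∫ z in Sᶜ, (z.1-z.2)^2 * Real.log |z.1-z.2| * (G z.1*G z.2) ∂μ := by
      refine setIntegral_mono_set hlogint ?_ (HasSubset.Subset.eventuallyLE hT_sub)
      refine (ae_restrict_iff' hSmeas.compl).2 (Filter.Eventually.of_forall fun z hz => ?_)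
      have ht : 1 < |z.1 - z.2| := by
        simp only [hSdef, mem_compl_iff, mem_setOf_eq, not_le] at hz
        exact hz
      exact mul_nonneg (mul_nonneg (sq_nonneg _) (Real.log_nonneg ht.le)) (hw0 z)
    linarith
  have hTc : ∫ z in Tᶜ, (z.1-z.2)^2 * (G z.1 * G z.2) ∂μ ≤ 9 := by
    have s1 : ∫ z in Tᶜ, (z.1-z.2)^2 * (G z.1 * G z.2) ∂μ
        ≤ ∫ z in Tᶜ, 9 * (G z.1 * G z.2) ∂μ := by
      refine setIntegral_mono_on hg2.integrableOn ((hGG.const_mul 9).integrableOn)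
        hTmeas.compl (fun z hz => ?_)
      have ht : |z.1 - z.2| < 3 := by
        simp only [hTdef, mem_compl_iff, mem_setOf_eq, not_le] at hz
        exact hz
      have h9 : (z.1-z.2)^2 ≤ 9 := by nlinarith [sq_abs (z.1-z.2), abs_nonneg (z.1-z.2)]
      exact mul_le_mul_of_nonneg_right h9 (hw0 z)
    have s2 : ∫ z in Tᶜ, 9 * (G z.1 * G z.2) ∂μ ≤ 9 * 1 := by
      rw [integral_const_mul]
      refine mul_le_mul_of_nonneg_left ?_ (by norm_num)
      rw [← hwint]
      exact setIntegral_le_integral hGG (Filter.Eventually.of_forall hw0)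
    linarith
  have htot := integral_add_compl hTmeas hg2
  linarith

noncomputable section
open MeasureTheory Real Set Filter

lemma rpow_neg_le_one' {x γ : ℝ} (hγ : 0 ≤ γ) : (1 + |x|) ^ (-γ) ≤ 1 :=
  Real.rpow_le_one_of_one_le_of_nonpos (by simp [abs_nonneg]) (neg_nonpos.2 hγ)

lemma integrable_G_weight' {G : ℝ → ℝ} (hInt : Integrable G) (hpos : ∀ x, 0 ≤ G x)
    (γ : ℝ) (hγ : 0 ≤ γ) : Integrable (fun x => G x * (1 + |x|) ^ (-γ)) := by
  refine hInt.mono' ?_ ?_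
  · exact hInt.aestronglyMeasurable.mul
      ((((continuous_const.add continuous_abs).rpow_const
        (fun x => Or.inl (one_add_abs_pos x).ne'))).aestronglyMeasurable)
  · refine Filter.Eventually.of_forall (fun x => ?_)
    have h1 : (0:ℝ) ≤ (1 + |x|) ^ (-γ) := Real.rpow_nonneg (one_add_abs_pos x).le _
    have h2 := rpow_neg_le_one' (x := x) hγ
    rw [Real.norm_eq_abs, abs_mul, abs_of_nonneg (hpos x), abs_of_nonneg h1]
    calc G x * (1 + |x|) ^ (-γ) ≤ G x * 1 := mul_le_mul_of_nonneg_left h2 (hpos x)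
      _ = G x := mul_one _

set_option maxHeartbeats 1000000 in
lemma kappa_tendsto (Gf : ℝ → ℝ → ℝ) (hf : ∀ γ ∈ Ioo (0:ℝ) 1, IsProfile γ (Gf γ)) :
    Tendsto (fun γ : ℝ => (2:ℝ) ^ (-γ) * ∫ x, Gf γ x * (1 + |x|) ^ (-γ))
      (nhdsWithin 0 (Ioi 0)) (nhds 1) := by
  rw [Metric.tendsto_nhdsWithin_nhds]
  intro ε hε
  set ε' : ℝ := min ε 1 with hε'def
  have hε'0 : 0 < ε' := lt_min hε one_pos
  have hε'1 : ε' ≤ 1 := min_le_right _ _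
  have hε'ε : ε' ≤ ε := min_le_left _ _
  set R : ℝ := Real.sqrt (15/ε') with hRdef
  have hR2 : R^2 = 15/ε' := Real.sq_sqrt (by positivity)
  have hR0 : 0 < R := Real.sqrt_pos.2 (by positivity)
  set c : ℝ := 2*(1+R) with hcdef
  have hc1 : (1:ℝ) ≤ c := by rw [hcdef]; nlinarith
  have hlogc : 0 ≤ Real.log c := Real.log_nonneg hc1
  set δ₀ : ℝ := min 1 (ε'/(3*(Real.log c + 1))) with hδdef
  have hδ0 : 0 < δ₀ := lt_min one_pos (by positivity)
  refine ⟨δ₀, hδ0, fun γ hγmem hγd => ?_⟩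
  have hγ0 : 0 < γ := hγmem
  have hγδ : γ < δ₀ := by
    rw [Real.dist_eq, sub_zero, abs_of_pos hγ0] at hγd
    exact hγd
  have hγ1 : γ < 1 := hγδ.trans_le (min_le_left _ _)
  have hγsm : γ < ε'/(3*(Real.log c + 1)) := hγδ.trans_le (min_le_right _ _)
  -- profile facts
  have hpfull := hf γ ⟨hγ0, hγ1⟩
  have hM2 := second_moment_le hγ0 hγ1 hpfull
  obtain ⟨hpos, hInt, hI3, hmass, hmom, hweak⟩ := hpfull
  set G : ℝ → ℝ := Gf γ with hGdef
  have hwint : Integrable (fun x => G x * (1 + |x|) ^ (-γ)) :=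
    integrable_G_weight' hInt hpos γ hγ0.le
  have hI0 : 0 ≤ ∫ x, G x * (1 + |x|) ^ (-γ) :=
    integral_nonneg fun x => mul_nonneg (hpos x) (Real.rpow_nonneg (one_add_abs_pos x).le _)
  have h2γ1 : (2:ℝ) ^ (-γ) ≤ 1 :=
    Real.rpow_le_one_of_one_le_of_nonpos (by norm_num) (by linarith)
  have h2γ0 : (0:ℝ) < (2:ℝ) ^ (-γ) := Real.rpow_pos_of_pos (by norm_num) _
  -- upper bound κ ≤ 1
  have hIle : ∫ x, G x * (1 + |x|) ^ (-γ) ≤ 1 := by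
    have h' : ∫ x, G x * (1 + |x|) ^ (-γ) ≤ ∫ x, G x := by
      refine integral_mono hwint hInt fun x => ?_
      calc G x * (1 + |x|) ^ (-γ) ≤ G x * 1 :=
            mul_le_mul_of_nonneg_left (rpow_neg_le_one' hγ0.le) (hpos x)
        _ = G x := mul_one _
    rw [hmass] at h'
    exact h'
  have hup : (2:ℝ) ^ (-γ) * ∫ x, G x * (1 + |x|) ^ (-γ) ≤ 1 := by
    calc (2:ℝ) ^ (-γ) * ∫ x, G x * (1 + |x|) ^ (-γ) ≤ 1 * 1 :=
          mul_le_mul h2γ1 hIle hI0 (by norm_num)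
      _ = 1 := by norm_num
  -- Chebyshev tail bound
  have hx2G := integrable_sq_mul hpos hInt hI3
  set A : Set ℝ := {x | R < |x|} with hAdef
  have hAmeas : MeasurableSet A := (isOpen_lt continuous_const continuous_abs).measurableSet
  have htail : ∫ x in A, G x ≤ ε'/3 := by
    have s1 : ∫ x in A, G x ≤ ∫ x in A, (R^2)⁻¹ * (x^2 * G x) := by
      refine setIntegral_mono_on hInt.integrableOn
        ((hx2G.const_mul _).integrableOn) hAmeas (fun x hx => ?_)
      have hxR : R < |x| := hx
      have h1 : R^2 ≤ x^2 := by nlinarith [sq_abs x, abs_nonneg x]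
      have h2 : (0:ℝ) < R^2 := by positivity
      have h3 : (1:ℝ) ≤ (R^2)⁻¹ * x^2 := by
        rw [← inv_mul_cancel₀ h2.ne']
        exact mul_le_mul_of_nonneg_left h1 (by positivity)
      calc G x = 1 * G x := (one_mul _).symm
        _ ≤ ((R^2)⁻¹ * x^2) * G x := mul_le_mul_of_nonneg_right h3 (hpos x)
        _ = (R^2)⁻¹ * (x^2 * G x) := mul_assoc _ _ _
    have s2 : ∫ x in A, (R^2)⁻¹ * (x^2 * G x) ≤ (R^2)⁻¹ * 5 := by
      rw [integral_const_mul]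
      refine mul_le_mul_of_nonneg_left ?_ (by positivity)
      refine le_trans (setIntegral_le_integral hx2G
        (Filter.Eventually.of_forall fun x => mul_nonneg (sq_nonneg x) (hpos x))) hM2
    have s3 : (R^2)⁻¹ * 5 = ε'/3 := by
      rw [hR2, inv_div]
      ring
    linarith
  have hmasssplit : (∫ x in A, G x) + ∫ x in Aᶜ, G x = 1 := by
    rw [← hmass]
    exact integral_add_compl hAmeas hInt
  have hAc : 1 - ε'/3 ≤ ∫ x in Aᶜ, G x := by linarith
  -- lower bound on the weighted integral
  have hlow1 : (1+R) ^ (-γ) * (1 - ε'/3) ≤ ∫ x, G x * (1 + |x|) ^ (-γ) := by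
    have s1 : ∫ x in Aᶜ, (1+R) ^ (-γ) * G x ∂volume ≤ ∫ x in Aᶜ, G x * (1 + |x|) ^ (-γ) := by
      refine setIntegral_mono_on ((hInt.const_mul _).integrableOn)
        (hwint.integrableOn) hAmeas.compl (fun x hx => ?_)
      have hxR : |x| ≤ R := by
        have : ¬ (R < |x|) := hx
        linarith [not_lt.1 this]
      have h1 : (1+R) ^ (-γ) ≤ (1+|x|) ^ (-γ) :=
        Real.rpow_le_rpow_of_nonpos (one_add_abs_pos x) (by linarith) (by linarith)
      calc (1+R) ^ (-γ) * G x ≤ (1+|x|) ^ (-γ) * G x :=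
            mul_le_mul_of_nonneg_right h1 (hpos x)
        _ = G x * (1+|x|) ^ (-γ) := mul_comm _ _
    have s2 : (1+R) ^ (-γ) * (1 - ε'/3) ≤ ∫ x in Aᶜ, (1+R) ^ (-γ) * G x ∂volume := by
      rw [integral_const_mul]
      exact mul_le_mul_of_nonneg_left hAc (Real.rpow_nonneg (by linarith) _)
    have s3 : ∫ x in Aᶜ, G x * (1 + |x|) ^ (-γ) ≤ ∫ x, G x * (1 + |x|) ^ (-γ) :=
      setIntegral_le_integral hwint (Filter.Eventually.of_forall fun x =>
        mul_nonneg (hpos x) (Real.rpow_nonneg (one_add_abs_pos x).le _))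
    linarith
  -- exponential bound
  have hcγ : 1 - ε'/3 ≤ c ^ (-γ) := by
    have h1 := Real.add_one_le_exp (Real.log c * (-γ))
    rw [← Real.rpow_def_of_pos (by linarith : (0:ℝ) < c)] at h1
    have h2 : γ * (Real.log c + 1) ≤ ε'/3 := by
      have := mul_le_mul_of_nonneg_right hγsm.le (by positivity : (0:ℝ) ≤ 3*(Real.log c + 1))
      rw [div_mul_cancel₀] at this
      · nlinarith
      · positivity
    nlinarith [hγ0.le, hlogc]
  have hsplitc : c ^ (-γ) = (2:ℝ) ^ (-γ) * (1+R) ^ (-γ) := by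
    rw [hcdef, Real.mul_rpow (by norm_num) (by linarith)]
  -- combine lower bounds
  have hεthird : 0 ≤ 1 - ε'/3 := by linarith
  have hlow : (1 - ε'/3) * (1 - ε'/3) ≤ (2:ℝ) ^ (-γ) * ∫ x, G x * (1 + |x|) ^ (-γ) := by
    have t1 : (2:ℝ) ^ (-γ) * ((1+R) ^ (-γ) * (1 - ε'/3))
        ≤ (2:ℝ) ^ (-γ) * ∫ x, G x * (1 + |x|) ^ (-γ) :=
      mul_le_mul_of_nonneg_left hlow1 h2γ0.le
    have t2 : (1 - ε'/3) * (1 - ε'/3) ≤ (2:ℝ) ^ (-γ) * ((1+R) ^ (-γ) * (1 - ε'/3)) := by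
      have := mul_le_mul_of_nonneg_right hcγ hεthird
      rw [hsplitc] at this
      calc (1 - ε'/3) * (1 - ε'/3) ≤ (2:ℝ) ^ (-γ) * (1+R) ^ (-γ) * (1 - ε'/3) := this
        _ = (2:ℝ) ^ (-γ) * ((1+R) ^ (-γ) * (1 - ε'/3)) := by ring
    linarith
  -- conclude
  rw [Real.dist_eq, abs_lt]
  constructor
  · have : 1 - 2*(ε'/3) ≤ (1 - ε'/3) * (1 - ε'/3) := by nlinarith
    have h2 : 2*(ε'/3) < ε := by
      have : 2*(ε'/3) < ε' := by linarith
      linarith [hε'ε]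
    simp only [hGdef] at hlow hup ⊢
    linarith
  · simp only [hGdef] at hlow hup ⊢
    linarith

end


/-- **Lower control of the collision frequency.**
(i) For `γ ∈ (0,1)` and `G ∈ 𝓔_γ ∩ L²`, with `Σ_γ(y) = ∫ |x−y|^γ G(x) dx` and
`κ_γ = 2^{−γ} ∫ G(x)(1+|x|)^{−γ} dx`, one has for every `δ̃ ∈ (0,1)` and `y ∈ ℝ`
`Σ_γ(y) ≥ κ_γ (1+|y|)^γ − (1 − δ̃^γ) − √(2δ̃)‖G‖_{L²}`.
(ii) For any family of profiles, `κ_γ → 1` as `γ → 0⁺`. -/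
theorem collision_frequency_lower_bound :
    (∀ γ ∈ Ioo (0:ℝ) 1, ∀ G : ℝ → ℝ, IsProfile γ G →
      Integrable (fun x => (G x) ^ 2) →
      ∀ δ ∈ Ioo (0:ℝ) 1, ∀ y : ℝ,
        (∫ x, |x - y| ^ γ * G x) ≥
          ((2:ℝ) ^ (-γ) * ∫ x, G x * (1 + |x|) ^ (-γ)) * (1 + |y|) ^ γ
            - (1 - δ ^ γ) - Real.sqrt (2 * δ) * (∫ x, (G x) ^ 2) ^ ((1:ℝ)/2)) ∧
    (∀ Gf : ℝ → ℝ → ℝ, (∀ γ ∈ Ioo (0:ℝ) 1, IsProfile γ (Gf γ)) →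
      Tendsto (fun γ : ℝ => (2:ℝ) ^ (-γ) * ∫ x, Gf γ x * (1 + |x|) ^ (-γ))
        (nhdsWithin 0 (Ioi 0)) (nhds 1)) := by
  constructor
  · intro γ hγ G hp hL2 δ hδ y
    exact part_i hγ hp hL2 hδ y
  · intro Gf hf
    exact kappa_tendsto Gf hf

end
end

section
/- Let u, v : [0,∞) × ℝ → [0,1] be continuous functions, differentiable in t and ξ, such that for all t ≥ 0 and ξ ∈ ℝ: ∂_t u(t,ξ) − (1/4) ξ ∂_ξ u(t,ξ) + u(t,ξ) ≥ u(t,ξ/2)² and ∂_t v(t,ξ) − (1/4) ξ ∂_ξ v(t,ξ) + v(t,ξ) ≤ v(t,ξ/2)², and such that u(0,ξ) ≥ v(0,ξ) for all ξ ∈ ℝ. Then u(t,ξ) ≥ v(t,ξ) for all t ≥ 0 and all ξ ∈ ℝ. -/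
open MeasureTheory Real Set Filter

open Topology

noncomputable section

set_option maxHeartbeats 2000000 in
/-- **Comparison principle** for super- and sub-solutions of the self-similar Maxwell
equation in Fourier variables: if `∂_t u − (1/4)ξ∂_ξ u + u ≥ u(t,ξ/2)²`,
`∂_t v − (1/4)ξ∂_ξ v + v ≤ v(t,ξ/2)²`, with `u, v ∈ [0,1]` and `v(0,·) ≤ u(0,·)`,
then `v ≤ u` for all times. -/
theorem comparison_principle
    (u v : ℝ → ℝ → ℝ)
    (hucont : Continuous fun p : ℝ × ℝ => u p.1 p.2)
    (hvcont : Continuous fun p : ℝ × ℝ => v p.1 p.2)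
    (hu01 : ∀ t ξ : ℝ, 0 ≤ t → u t ξ ∈ Icc (0:ℝ) 1)
    (hv01 : ∀ t ξ : ℝ, 0 ≤ t → v t ξ ∈ Icc (0:ℝ) 1)
    (hut : ∀ t ξ : ℝ, 0 ≤ t → DifferentiableAt ℝ (fun s => u s ξ) t)
    (hux : ∀ t ξ : ℝ, 0 ≤ t → DifferentiableAt ℝ (fun η => u t η) ξ)
    (hvt : ∀ t ξ : ℝ, 0 ≤ t → DifferentiableAt ℝ (fun s => v s ξ) t)
    (hvx : ∀ t ξ : ℝ, 0 ≤ t → DifferentiableAt ℝ (fun η => v t η) ξ)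
    (hsuper : ∀ t ξ : ℝ, 0 ≤ t →
      (u t (ξ/2)) ^ 2 ≤
        deriv (fun s => u s ξ) t - (1/4) * ξ * deriv (fun η => u t η) ξ + u t ξ)
    (hsub : ∀ t ξ : ℝ, 0 ≤ t →
      deriv (fun s => v s ξ) t - (1/4) * ξ * deriv (fun η => v t η) ξ + v t ξ ≤
        (v t (ξ/2)) ^ 2)
    (hinit : ∀ ξ : ℝ, v 0 ξ ≤ u 0 ξ) :
    ∀ t ξ : ℝ, 0 ≤ t → v t ξ ≤ u t ξ := by
  intro t ξ ht
  -- It suffices to show `v t ξ - u t ξ ≤ ε` for every `ε > 0`.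
  rw [← sub_nonpos]
  refine le_of_forall_pos_le_add (fun ε hε => ?_)
  rw [zero_add]
  -- positive constant
  set C : ℝ := Real.exp (3 * t) * (1/4 + Real.log (1 + ξ ^ 2)) with hC
  have hlogξ : (0:ℝ) ≤ Real.log (1 + ξ ^ 2) := Real.log_nonneg (by nlinarith [sq_nonneg ξ])
  have hCpos : 0 < C := by
    have := Real.exp_pos (3 * t)
    positivity
  set δ : ℝ := ε / C with hδdef
  have hδ : 0 < δ := div_pos hε hCpos
  -- penalized function
  set F : ℝ × ℝ → ℝ := fun p =>
    Real.exp (-(3 * p.1)) * (v p.1 p.2 - u p.1 p.2) - δ * Real.log (1 + p.2 ^ 2) with hF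
  have hFcont : Continuous F := by
    have hlog : Continuous fun p : ℝ × ℝ => Real.log (1 + p.2 ^ 2) := by
      rw [continuous_iff_continuousAt]
      intro p
      exact (Real.continuousAt_log (by positivity)).comp (by fun_prop)
    fun_prop
  -- bounds on w = v - u
  have hwlb : ∀ s η : ℝ, 0 ≤ s → (-1:ℝ) ≤ v s η - u s η := fun s η hs => by
    have h1 := hv01 s η hs; have h2 := hu01 s η hs
    simp only [mem_Icc] at h1 h2; linarith
  have hwub : ∀ s η : ℝ, 0 ≤ s → v s η - u s η ≤ 1 := fun s η hs => by
    have h1 := hv01 s η hs; have h2 := hu01 s η hs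
    simp only [mem_Icc] at h1 h2; linarith
  have hexp01 : ∀ s : ℝ, 0 ≤ s → Real.exp (-(3 * s)) ≤ 1 := fun s hs =>
    Real.exp_le_one_iff.mpr (by linarith)
  -- radius
  set R : ℝ := Real.exp (2 / δ) with hR
  have hRpos : 0 < R := Real.exp_pos _
  -- compact set
  set K : Set (ℝ × ℝ) := Icc (0:ℝ) t ×ˢ Icc (-R) R with hKdef
  have hK : IsCompact K := (isCompact_Icc).prod isCompact_Icc
  have h00K : ((0:ℝ), (0:ℝ)) ∈ K := by
    simp only [hKdef, Set.mem_prod, Set.mem_Icc]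
    refine ⟨⟨le_rfl, ht⟩, ⟨?_, ?_⟩⟩ <;> linarith
  obtain ⟨p, hpK, hmax⟩ := hK.exists_isMaxOn ⟨_, h00K⟩ hFcont.continuousOn
  obtain ⟨⟨ht0, htt⟩, _⟩ := hpK
  set t₀ : ℝ := p.1 with ht₀
  set ξ₀ : ℝ := p.2 with hξ₀
  -- F(0,0) ≥ -1
  have hF00 : (-1:ℝ) ≤ F (0, 0) := by
    have h0 : F (0, 0) = v 0 0 - u 0 0 := by simp [hF]
    rw [h0]; exact hwlb 0 0 le_rfl
  -- bound on the main term of F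
  have hFub : ∀ s η : ℝ, 0 ≤ s → Real.exp (-(3 * s)) * (v s η - u s η) ≤ 1 := by
    intro s η hs
    have h1 := hwub s η hs
    have h2 := hexp01 s hs
    have h3 := (Real.exp_pos (-(3*s))).le
    nlinarith [mul_le_mul_of_nonneg_left h1 h3]
  -- the max over K is a global max over [0,t] × ℝ
  have hglob : ∀ s η : ℝ, 0 ≤ s → s ≤ t → F (s, η) ≤ F p := by
    intro s η hs hst
    by_cases hη : |η| ≤ R
    · exact hmax (Set.mk_mem_prod ⟨hs, hst⟩ (abs_le.mp hη))
    · push_neg at hη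
      have hRη : R ^ 2 < η ^ 2 := by
        have := abs_nonneg η
        nlinarith [sq_abs η]
      have h2 : Real.log (R ^ 2) = 2 * (2 / δ) := by
        rw [hR, Real.log_pow, Real.log_exp]; norm_num
      have h1 : Real.log (R ^ 2) ≤ Real.log (1 + η ^ 2) :=
        Real.log_le_log (by positivity) (by nlinarith)
      have hlog : 4 / δ ≤ Real.log (1 + η ^ 2) := by
        have h3 : (4:ℝ) / δ = 2 * (2 / δ) := by ring
        linarith
      have h4 : 4 ≤ δ * Real.log (1 + η ^ 2) := by
        rw [div_le_iff₀ hδ] at hlog; linarith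
      have h5 := hFub s η hs
      have h6 : F (s, η) ≤ -3 := by
        simp only [hF]; linarith
      have h7 := hmax h00K
      calc F (s, η) ≤ -3 := h6
        _ ≤ F (0,0) := by linarith
        _ ≤ F p := h7
  -- key claim: F p ≤ δ / 4
  have hlog₀ : (0:ℝ) ≤ Real.log (1 + ξ₀ ^ 2) := Real.log_nonneg (by nlinarith [sq_nonneg ξ₀])
  set E : ℝ := Real.exp (-(3 * t₀)) with hE
  have hEpos : 0 < E := Real.exp_pos _
  set W : ℝ := v t₀ ξ₀ - u t₀ ξ₀ with hW
  have hFp : F p = E * W - δ * Real.log (1 + ξ₀ ^ 2) := rfl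
  have hkey : F p ≤ δ / 4 := by
    by_cases hWpos : W ≤ 0
    · rw [hFp]
      nlinarith [mul_nonneg hδ.le hlog₀]
    push_neg at hWpos
    -- t₀ > 0
    have ht0pos : 0 < t₀ := by
      rcases ht0.lt_or_eq with h | h
      · exact h
      · exfalso
        have h2 : W ≤ 0 := by
          rw [hW, ← h]
          exact sub_nonpos.mpr (hinit ξ₀)
        linarith
    -- partial derivatives
    set av : ℝ := deriv (fun s => v s ξ₀) t₀ with hav
    set au : ℝ := deriv (fun s => u s ξ₀) t₀ with hau
    set bv : ℝ := deriv (fun η => v t₀ η) ξ₀ with hbv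
    set bu : ℝ := deriv (fun η => u t₀ η) ξ₀ with hbu
    have havD : HasDerivAt (fun s => v s ξ₀) av t₀ := (hvt t₀ ξ₀ ht0).hasDerivAt
    have hauD : HasDerivAt (fun s => u s ξ₀) au t₀ := (hut t₀ ξ₀ ht0).hasDerivAt
    have hbvD : HasDerivAt (fun η => v t₀ η) bv ξ₀ := (hvx t₀ ξ₀ ht0).hasDerivAt
    have hbuD : HasDerivAt (fun η => u t₀ η) bu ξ₀ := (hux t₀ ξ₀ ht0).hasDerivAt
    -- derivative of the log penalization
    have hP : (0:ℝ) < 1 + ξ₀ ^ 2 := by positivity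
    have hgD : HasDerivAt (fun η : ℝ => Real.log (1 + η ^ 2)) (2 * ξ₀ / (1 + ξ₀ ^ 2)) ξ₀ := by
      have h1 : HasDerivAt (fun η : ℝ => 1 + η ^ 2) (2 * ξ₀) ξ₀ := by
        simpa using (hasDerivAt_pow 2 ξ₀).const_add (1:ℝ)
      exact h1.log hP.ne'
    -- ξ-direction: derivative vanishes at the max
    have hkD : HasDerivAt (fun η => F (t₀, η))
        (E * (bv - bu) - δ * (2 * ξ₀ / (1 + ξ₀ ^ 2))) ξ₀ :=
      ((hbvD.sub hbuD).const_mul E).sub (hgD.const_mul δ)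
    have hkmax : IsLocalMax (fun η => F (t₀, η)) ξ₀ :=
      Filter.Eventually.of_forall (fun η => hglob t₀ η ht0 htt)
    have heq0 : E * (bv - bu) - δ * (2 * ξ₀ / (1 + ξ₀ ^ 2)) = 0 :=
      hkmax.hasDerivAt_eq_zero hkD
    rw [sub_eq_zero] at heq0
    -- t-direction: derivative is nonneg at the max
    have hexpD : HasDerivAt (fun s : ℝ => Real.exp (-(3 * s))) (E * (-3)) t₀ := by
      have hlin : HasDerivAt (fun s : ℝ => -(3 * s)) (-3) t₀ := by
        simpa using ((hasDerivAt_id t₀).const_mul (3:ℝ)).fun_neg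
      exact hlin.exp
    have hhD : HasDerivAt (fun s => F (s, ξ₀))
        (E * (-3) * W + E * (av - au)) t₀ :=
      (hexpD.mul (havD.sub hauD)).sub_const (δ * Real.log (1 + ξ₀ ^ 2))
    have hD0 : 0 ≤ E * (-3) * W + E * (av - au) := by
      have hmem : Ioo (0:ℝ) t₀ ∈ 𝓝[<] t₀ := Ioo_mem_nhdsLT ht0pos
      have hEv : ∀ᶠ s in 𝓝[<] t₀, 0 ≤ slope (fun s => F (s, ξ₀)) t₀ s := by
        filter_upwards [hmem] with s hs
        have h1 : F (s, ξ₀) ≤ F (t₀, ξ₀) := hglob s ξ₀ hs.1.le (hs.2.le.trans htt)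
        rw [slope_def_field]
        exact div_nonneg_of_nonpos (by linarith) (by linarith [hs.2])
      have hT : Tendsto (slope (fun s => F (s, ξ₀)) t₀) (𝓝[<] t₀)
          (𝓝 (E * (-3) * W + E * (av - au))) :=
        (hasDerivAt_iff_tendsto_slope.mp hhD).mono_left
          (nhdsWithin_mono _ (fun x hx => ne_of_lt hx))
      exact ge_of_tendsto hT hEv
    -- neighbor bound: (v-u)(t₀, ξ₀/2) ≤ W
    have hgmono : Real.log (1 + (ξ₀ / 2) ^ 2) ≤ Real.log (1 + ξ₀ ^ 2) :=
      Real.log_le_log (by positivity) (by nlinarith [sq_nonneg ξ₀])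
    have hnb : v t₀ (ξ₀ / 2) - u t₀ (ξ₀ / 2) ≤ W := by
      have h1 : E * (v t₀ (ξ₀/2) - u t₀ (ξ₀/2)) - δ * Real.log (1 + (ξ₀/2) ^ 2) ≤
          E * W - δ * Real.log (1 + ξ₀ ^ 2) := hglob t₀ (ξ₀ / 2) ht0 htt
      have h2 : E * (v t₀ (ξ₀/2) - u t₀ (ξ₀/2)) ≤ E * W := by
        have h3 : δ * Real.log (1 + (ξ₀/2) ^ 2) ≤ δ * Real.log (1 + ξ₀ ^ 2) :=
          mul_le_mul_of_nonneg_left hgmono hδ.le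
        linarith
      exact le_of_mul_le_mul_left h2 hEpos
    -- nonlinear term bound
    have hnl : (v t₀ (ξ₀ / 2)) ^ 2 - (u t₀ (ξ₀ / 2)) ^ 2 ≤ 2 * W := by
      have h1 := hv01 t₀ (ξ₀/2) ht0
      have h2 := hu01 t₀ (ξ₀/2) ht0
      simp only [mem_Icc] at h1 h2
      nlinarith [hnb, hWpos]
    -- PDE inequalities at the max point
    have hPDE : (av - au) - (1/4) * ξ₀ * (bv - bu) + W ≤ 2 * W := by
      have h1 := hsub t₀ ξ₀ ht0
      have h2 := hsuper t₀ ξ₀ ht0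
      simp only [← hav, ← hau, ← hbv, ← hbu] at h1 h2
      linarith [hnl, hW.le, hW.ge]
    -- bound on the drift term
    have hq : (1/4) * ξ₀ * (δ * (2 * ξ₀ / (1 + ξ₀ ^ 2))) =
        (δ / 2) * (ξ₀ ^ 2 / (1 + ξ₀ ^ 2)) := by field_simp; ring
    have hq1 : ξ₀ ^ 2 / (1 + ξ₀ ^ 2) ≤ 1 := by
      rw [div_le_one hP]; nlinarith
    have hq0 : (0:ℝ) ≤ ξ₀ ^ 2 / (1 + ξ₀ ^ 2) := by positivity
    have hQ1 : (1/4) * ξ₀ * (δ * (2 * ξ₀ / (1 + ξ₀ ^ 2))) ≤ δ / 2 := by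
      rw [hq]; nlinarith
    have hQ0 : 0 ≤ (1/4) * ξ₀ * (δ * (2 * ξ₀ / (1 + ξ₀ ^ 2))) := by
      rw [hq]; positivity
    -- combine everything: E * W ≤ δ / 4
    have hEW : E * W ≤ δ / 4 := by
      have h1 : E * ((av - au) - (1/4) * ξ₀ * (bv - bu) + W) ≤ E * (2 * W) :=
        mul_le_mul_of_nonneg_left hPDE hEpos.le
      have h2 : (1/4) * ξ₀ * (E * (bv - bu)) =
          (1/4) * ξ₀ * (δ * (2 * ξ₀ / (1 + ξ₀ ^ 2))) := by rw [heq0]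
      nlinarith [hQ1, hQ0, hD0, h1, h2]
    rw [hFp]
    nlinarith [mul_nonneg hδ.le hlog₀]
  -- conclude
  have hfin : Real.exp (-(3 * t)) * (v t ξ - u t ξ) - δ * Real.log (1 + ξ ^ 2) ≤ δ / 4 :=
    le_trans (hglob t ξ ht le_rfl) hkey
  have e1 : Real.exp (3 * t) * Real.exp (-(3 * t)) = 1 := by
    rw [← Real.exp_add]; simp
  have h2 : Real.exp (-(3 * t)) * (v t ξ - u t ξ) ≤ δ / 4 + δ * Real.log (1 + ξ ^ 2) := by
    linarith
  have h3 : Real.exp (3 * t) * (Real.exp (-(3 * t)) * (v t ξ - u t ξ)) ≤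
      Real.exp (3 * t) * (δ / 4 + δ * Real.log (1 + ξ ^ 2)) :=
    mul_le_mul_of_nonneg_left h2 (Real.exp_pos _).le
  have h4 : Real.exp (3 * t) * (Real.exp (-(3 * t)) * (v t ξ - u t ξ)) = v t ξ - u t ξ := by
    rw [← mul_assoc, e1, one_mul]
  have h5 : Real.exp (3 * t) * (δ / 4 + δ * Real.log (1 + ξ ^ 2)) = δ * C := by
    rw [hC]; ring
  have h6 : δ * C = ε := by
    rw [hδdef]; exact div_mul_cancel₀ ε hCpos.ne'
  rw [h4, h5, h6] at h3
  exact h3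
end
end
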